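/- arXiv:1212.5773 — 9 statements merged into one kernel-verified Lean document; each statement's English description precedes it below -/
import Mathlib

section
/- Let $a$, $b$, $B$ be as above, and define $F(t) = \int_0^t b(\tau)^2\,d\tau$. Then there exists a constant $C$ depending only on $i_a$ and $s_a$ such that $F(t) \le t\, b(t)^2 \le C\, F(t)$ for all $t \ge 0$. -/
open Set Filter MeasureTheory intervalIntegral

theorem stmt_3 (a : ℝ → ℝ) (hapos : ∀ t > 0, 0 < a t)
    (haC1 : ContDiffOn ℝ 1 a (Set.Ioi 0))
    (ia sa : ℝ) (hia : -1 < ia) (hisa : ia ≤ sa)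
    (hinf : ∀ t > 0, ia ≤ t * deriv a t / a t)
    (hsup : ∀ t > 0, t * deriv a t / a t ≤ sa) :
    ∃ C : ℝ, ∀ t ≥ 0,
      (∫ τ in (0:ℝ)..t, (τ * a τ)^2) ≤ t * (t * a t)^2 ∧
      t * (t * a t)^2 ≤ C * ∫ τ in (0:ℝ)..t, (τ * a τ)^2 := by
  set g : ℝ → ℝ := fun τ => (τ * a τ)^2 with hgdef
  have hacont : ContinuousOn a (Ioi 0) := haC1.continuousOn
  have hadiff : ∀ t > 0, HasDerivAt a (deriv a t) t := by
    intro t ht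
    exact ((haC1.differentiableOn one_ne_zero).differentiableAt
      (Ioi_mem_nhds ht)).hasDerivAt
  have hub : ∀ t > 0, t * deriv a t ≤ sa * a t := by
    intro t ht
    have h := hsup t ht
    have ha := hapos t ht
    have := (div_le_iff₀ ha).mp h
    linarith
  have hlb : ∀ t > 0, ia * a t ≤ t * deriv a t := by
    intro t ht
    have h := hinf t ht
    have ha := hapos t ht
    have := (le_div_iff₀ ha).mp h
    linarith
  have hbderiv : ∀ t > 0, HasDerivAt (fun τ => τ * a τ) (a t + t * deriv a t) t := by
    intro t ht
    have := (hasDerivAt_id' t).mul (hadiff t ht)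
    simpa [Pi.mul_def] using this
  have hbpos : ∀ t > 0, 0 < a t + t * deriv a t := by
    intro t ht
    have h1 := hlb t ht
    have ha := hapos t ht
    nlinarith
  have hbcont : ContinuousOn (fun τ => τ * a τ) (Ioi 0) :=
    continuousOn_id.mul hacont
  have hbmono : StrictMonoOn (fun τ => τ * a τ) (Ioi 0) := by
    apply strictMonoOn_of_deriv_pos (convex_Ioi 0) hbcont
    intro t ht
    rw [interior_Ioi] at ht
    rw [(hbderiv t ht).deriv]
    exact hbpos t ht
  have hgnn : ∀ τ, 0 ≤ g τ := fun τ => sq_nonneg _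
  have hgmono : MonotoneOn g (Ici 0) := by
    intro x hx y hy hxy
    rcases eq_or_lt_of_le (show (0:ℝ) ≤ x from hx) with h0 | h0
    · have : g x = 0 := by simp [hgdef, ← h0]
      rw [this]; exact hgnn y
    · rcases eq_or_lt_of_le hxy with rfl | hxy'
      · exact le_rfl
      · have hy' : (0:ℝ) < y := lt_trans h0 hxy'
        have hb : x * a x ≤ y * a y := (hbmono h0 hy' hxy').le
        have hbx : 0 ≤ x * a x := le_of_lt (mul_pos h0 (hapos x h0))
        exact pow_le_pow_left₀ hbx hb 2
  have hgint : ∀ t ≥ 0, IntervalIntegrable g volume 0 t := by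
    intro t ht
    apply MonotoneOn.intervalIntegrable
    apply hgmono.mono
    rw [uIcc_of_le ht]
    exact Icc_subset_Ici_self
  have hgcont : ContinuousOn g (Ioi 0) := hbcont.pow 2
  -- constant
  set C : ℝ := 3 + 2 * sa with hCdef
  have hCpos : (0:ℝ) < C := by simp only [hCdef]; linarith
  refine ⟨C, fun t ht => ?_⟩
  set F : ℝ → ℝ := fun u => ∫ τ in (0:ℝ)..u, g τ with hFdef
  have hFnn : ∀ u ≥ 0, 0 ≤ F u := by
    intro u hu
    exact intervalIntegral.integral_nonneg hu fun τ _ => hgnn τ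
  constructor
  · -- F t ≤ t * g t
    rcases eq_or_lt_of_le ht with rfl | ht'
    · simp
    · have h1 : (∫ τ in (0:ℝ)..t, g τ) ≤ ∫ _ in (0:ℝ)..t, g t := by
        apply intervalIntegral.integral_mono_on ht (hgint t ht)
          intervalIntegrable_const
        intro τ hτ
        exact hgmono hτ.1 ht hτ.2
      simpa using h1.trans_eq (by simp [mul_comm, hgdef])
  · -- t * g t ≤ C * F t
    rcases eq_or_lt_of_le ht with rfl | ht'
    · simp
    set H : ℝ → ℝ := fun u => C * F u - u * g u with hHdef
    have hHderiv : ∀ u > 0, HasDerivAt H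
        (C * g u - (1 * g u + u * (2 * (u * a u) ^ 1 * (a u + u * deriv a u)))) u := by
      intro u hu
      have hFd : HasDerivAt F (g u) u := by
        apply intervalIntegral.integral_hasDerivAt_right (hgint u hu.le)
        · exact hgcont.stronglyMeasurableAtFilter isOpen_Ioi u hu
        · exact (hgcont u hu).continuousAt (Ioi_mem_nhds hu)
      have hgd : HasDerivAt g (2 * (u * a u) ^ 1 * (a u + u * deriv a u)) u := by
        simpa [Pi.pow_def] using (hbderiv u hu).pow 2
      exact (hFd.const_mul C).sub ((hasDerivAt_id u).mul hgd)
    have hHderiv_nonneg : ∀ u > 0,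
        0 ≤ C * g u - (1 * g u + u * (2 * (u * a u) ^ 1 * (a u + u * deriv a u))) := by
      intro u hu
      have h1 := hub u hu
      have ha := hapos u hu
      have hu0 : (0:ℝ) < u := hu
      simp only [hgdef, hCdef, pow_one]
      nlinarith [sq_nonneg (u * a u), mul_pos hu0 ha,
        mul_le_mul_of_nonneg_left h1 (le_of_lt (mul_pos (mul_pos hu0 hu0) ha))]
    have hHmono : MonotoneOn H (Ioi 0) := by
      apply monotoneOn_of_deriv_nonneg (convex_Ioi 0)
      · intro u hu
        exact (hHderiv u hu).continuousAt.continuousWithinAt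
      · intro u hu
        rw [interior_Ioi] at hu
        exact (hHderiv u hu).differentiableAt.differentiableWithinAt
      · intro u hu
        rw [interior_Ioi] at hu
        rw [(hHderiv u hu).deriv]
        exact hHderiv_nonneg u hu
    -- conclude via limit s → 0+
    have key : ∀ s ∈ Ioo (0:ℝ) (min t 1), -(s * g 1) ≤ H t := by
      intro s hs
      have hs0 : 0 < s := hs.1
      have hst : s ≤ t := le_of_lt (lt_of_lt_of_le hs.2 (min_le_left _ _))
      have hs1 : s ≤ 1 := le_of_lt (lt_of_lt_of_le hs.2 (min_le_right _ _))
      have h1 : H s ≤ H t := hHmono hs0 ht' hst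
      have h2 : g s ≤ g 1 := hgmono (le_of_lt hs0) (by norm_num) hs1
      have h3 : 0 ≤ C * F s := mul_nonneg hCpos.le (hFnn s hs0.le)
      have h4 : s * g s ≤ s * g 1 := mul_le_mul_of_nonneg_left h2 hs0.le
      have : -(s * g 1) ≤ H s := by simp only [hHdef]; linarith
      linarith
    have hlim : Tendsto (fun s => -(s * g 1)) (nhdsWithin 0 (Ioi 0)) (nhds 0) := by
      have : Tendsto (fun s : ℝ => -(s * g 1)) (nhds 0) (nhds (-(0 * g 1))) := by
        exact (((continuous_id.mul continuous_const).neg).tendsto 0)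
      simpa using this.mono_left nhdsWithin_le_nhds
    have hev : ∀ᶠ s in nhdsWithin 0 (Ioi 0), -(s * g 1) ≤ H t := by
      filter_upwards [Ioo_mem_nhdsGT_of_mem
        (Set.mem_Ico.mpr ⟨le_rfl, lt_min ht' one_pos⟩)] with s hs
      exact key s hs
    have h0H : 0 ≤ H t := le_of_tendsto hlim hev
    have : t * g t ≤ C * F t := by simp only [hHdef] at h0H; linarith
    exact this
end

section
/- Let $a$ be $C^1$ on $(0,\infty)$ with $-1 < i_a \le s_a < \infty$, $b(t) = a(t)t$, and $H(t) = \int_0^t a(\tau)b(\tau)\,d\tau$. Then there exist positive constants $C_1$ depending only on $i_a$ and $C_2$ depending only on $i_a, s_a$ such that $C_1 H(t) \le b(t)^2 \le C_2 H(t)$ for all $t \ge 0$. -/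
open Set MeasureTheory intervalIntegral Filter Topology

theorem stmt_4 (a : ℝ → ℝ) (hapos : ∀ t > 0, 0 < a t)
    (haC1 : ContDiffOn ℝ 1 a (Set.Ioi 0))
    (ia sa : ℝ) (hia : -1 < ia) (hisa : ia ≤ sa)
    (hinf : ∀ t > 0, ia ≤ t * deriv a t / a t)
    (hsup : ∀ t > 0, t * deriv a t / a t ≤ sa) :
    ∃ C₁ > (0:ℝ), ∃ C₂ > (0:ℝ), ∀ t ≥ 0,
      C₁ * (∫ τ in (0:ℝ)..t, a τ * (τ * a τ)) ≤ (t * a t)^2 ∧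
      (t * a t)^2 ≤ C₂ * ∫ τ in (0:ℝ)..t, a τ * (τ * a τ) := by
  have hconta : ContinuousOn a (Set.Ioi 0) := haC1.continuousOn
  have hdiff : ∀ t ∈ Set.Ioi (0:ℝ), HasDerivAt a (deriv a t) t := by
    intro t ht
    exact ((haC1.differentiableOn one_ne_zero).differentiableAt (isOpen_Ioi.mem_nhds ht)).hasDerivAt
  have hcd : ContinuousOn (deriv a) (Set.Ioi 0) :=
    haC1.continuousOn_deriv_of_isOpen isOpen_Ioi le_rfl
  have hlow : ∀ t > (0:ℝ), ia * a t ≤ t * deriv a t := fun t ht =>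
    (le_div_iff₀ (hapos t ht)).mp (hinf t ht)
  have hupp : ∀ t > (0:ℝ), t * deriv a t ≤ sa * a t := fun t ht =>
    (div_le_iff₀ (hapos t ht)).mp (hsup t ht)
  set A := a 1 with hAdef
  have hA0 : 0 < A := hapos 1 one_pos
  -- the function a τ * τ^(-ia) is monotone on (0, ∞)
  have hhd : ∀ x ∈ Set.Ioi (0:ℝ), HasDerivAt (fun τ => a τ * τ ^ (-ia))
      (deriv a x * x ^ (-ia) + a x * (-ia * x ^ (-ia - 1))) x := by
    intro x hx
    exact (hdiff x hx).mul (Real.hasDerivAt_rpow_const (Or.inl (ne_of_gt hx)))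
  have hmono : MonotoneOn (fun τ => a τ * τ ^ (-ia)) (Set.Ioi (0:ℝ)) := by
    apply monotoneOn_of_deriv_nonneg (convex_Ioi 0)
    · exact hconta.mul (fun x hx =>
        (Real.continuousAt_rpow_const x (-ia) (Or.inl (ne_of_gt hx))).continuousWithinAt)
    · rw [interior_Ioi]
      exact fun x hx => ((hhd x hx).differentiableAt).differentiableWithinAt
    · rw [interior_Ioi]
      intro x hx
      rw [(hhd x hx).deriv]
      have h1 : x ^ (-ia) = x ^ (-ia - 1) * x := by
        rw [← Real.rpow_add_one (ne_of_gt hx) (-ia - 1)]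
        norm_num
      have h2 : (0:ℝ) ≤ x ^ (-ia - 1) := (Real.rpow_pos_of_pos hx _).le
      have h3 := hlow x hx
      rw [h1]
      nlinarith [mul_nonneg h2 (sub_nonneg.mpr h3)]
  -- growth bound near zero
  have habd : ∀ τ ∈ Set.Ioc (0:ℝ) 1, a τ ≤ A * τ ^ ia := by
    intro τ hτ
    have h1 := hmono (mem_Ioi.mpr hτ.1) (mem_Ioi.mpr one_pos) hτ.2
    simp only [Real.one_rpow, mul_one] at h1
    have hp : 0 < τ ^ ia := Real.rpow_pos_of_pos hτ.1 ia
    have hq : τ ^ (-ia) * τ ^ ia = 1 := by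
      rw [← Real.rpow_add hτ.1]; simp
    calc a τ = a τ * τ ^ (-ia) * τ ^ ia := by rw [mul_assoc, hq, mul_one]
    _ ≤ A * τ ^ ia := mul_le_mul_of_nonneg_right h1 hp.le
  set f : ℝ → ℝ := fun τ => a τ * (τ * a τ) with hfdef
  have hfcont : ContinuousOn f (Set.Ioi 0) :=
    hconta.mul ((continuous_id.continuousOn).mul hconta)
  -- integrability on (0, t]
  have hfint : ∀ t > (0:ℝ), IntegrableOn f (Set.Ioc 0 t) := by
    intro t ht
    set m := min t 1 with hm
    have hm0 : 0 < m := lt_min ht one_pos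
    have hsplit : Set.Ioc (0:ℝ) t = Set.Ioc 0 m ∪ Set.Ioc m t :=
      (Set.Ioc_union_Ioc_eq_Ioc hm0.le (min_le_left t 1)).symm
    rw [hsplit]
    apply MeasureTheory.IntegrableOn.union
    · have hmaj : IntegrableOn (fun τ : ℝ => A^2 * τ ^ (1 + 2*ia)) (Set.Ioc 0 m) := by
        have h1 : IntervalIntegrable (fun x : ℝ => x ^ (1 + 2*ia)) volume 0 m :=
          intervalIntegrable_rpow' (by linarith)
        exact ((intervalIntegrable_iff_integrableOn_Ioc_of_le hm0.le).mp h1).const_mul (A^2)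
      have hsub : Set.Ioc (0:ℝ) m ⊆ Set.Ioi 0 := fun x hx => hx.1
      refine hmaj.mono' ((hfcont.mono hsub).aestronglyMeasurable measurableSet_Ioc) ?_
      rw [ae_restrict_iff' measurableSet_Ioc]
      filter_upwards with τ hτ
      have hτ0 := hτ.1
      have hτ1 : τ ∈ Set.Ioc (0:ℝ) 1 := ⟨hτ0, le_trans hτ.2 (min_le_right t 1)⟩
      have hb := habd τ hτ1
      have ha := hapos τ hτ0
      have hrp : 0 < τ ^ ia := Real.rpow_pos_of_pos hτ0 ia
      have e2 : τ ^ (1 + 2*ia) = τ * (τ ^ ia * τ ^ ia) := by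
        rw [show (1 + 2*ia) = 1 + (ia + ia) by ring, Real.rpow_add hτ0, Real.rpow_add hτ0,
          Real.rpow_one]
      have hnn : 0 ≤ f τ := mul_nonneg ha.le (mul_nonneg hτ0.le ha.le)
      rw [Real.norm_eq_abs, abs_of_nonneg hnn, e2]
      have hsq : a τ * a τ ≤ (A * τ ^ ia) * (A * τ ^ ia) :=
        mul_le_mul hb hb ha.le (by positivity)
      show a τ * (τ * a τ) ≤ A ^ 2 * (τ * (τ ^ ia * τ ^ ia))
      nlinarith [hsq, hτ0]
    · have hsub : Set.Icc m t ⊆ Set.Ioi 0 := fun x hx => lt_of_lt_of_le hm0 hx.1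
      exact ((hfcont.mono hsub).integrableOn_Icc).mono_set Set.Ioc_subset_Icc_self
  have hfii0 : ∀ t > (0:ℝ), IntervalIntegrable f volume 0 t := fun t ht =>
    (intervalIntegrable_iff_integrableOn_Ioc_of_le ht.le).mpr (hfint t ht)
  refine ⟨2*(1+ia), by linarith, 2*(1+sa), by linarith, ?_⟩
  intro t ht
  rcases eq_or_lt_of_le ht with heq | ht
  · rw [← heq]
    norm_num
  -- t > 0 case
  have hIocmem : Set.Ioc (0:ℝ) t ∈ 𝓝[>] (0:ℝ) := Ioc_mem_nhdsGT_of_mem ⟨le_refl 0, ht⟩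
  have key : ∀ ε ∈ Set.Ioc (0:ℝ) t,
      2*(1+ia) * ∫ τ in ε..t, f τ ≤ (t*a t)^2 - (ε*a ε)^2 ∧
      (t*a t)^2 - (ε*a ε)^2 ≤ 2*(1+sa) * ∫ τ in ε..t, f τ := by
    intro ε hε
    have hε0 := hε.1
    have hεt := hε.2
    have hIcc : Set.Icc ε t ⊆ Set.Ioi 0 := fun x hx => lt_of_lt_of_le hε0 hx.1
    have hg : ∀ x ∈ Set.uIcc ε t, HasDerivAt (fun τ => (τ * a τ)^2)
        (2*(x*a x)*(a x + x * deriv a x)) x := by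
      intro x hx
      rw [Set.uIcc_of_le hεt] at hx
      have hx0 : (0:ℝ) < x := hIcc hx
      have h1 : HasDerivAt (fun τ => τ * a τ) (1 * a x + x * deriv a x) x :=
        (hasDerivAt_id x).mul (hdiff x hx0)
      have h2 := h1.fun_pow 2
      exact h2.congr_deriv (by norm_num)
    have hcont' : ContinuousOn (fun x => 2*(x*a x)*(a x + x * deriv a x)) (Set.Icc ε t) := by
      have h1 : ContinuousOn a (Set.Icc ε t) := hconta.mono hIcc
      have h2 : ContinuousOn (deriv a) (Set.Icc ε t) := hcd.mono hIcc
      exact ((continuousOn_const.mul ((continuous_id.continuousOn).mul h1)).mul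
        (h1.add ((continuous_id.continuousOn).mul h2)))
    have hii : IntervalIntegrable (fun x => 2*(x*a x)*(a x + x * deriv a x)) volume ε t :=
      hcont'.intervalIntegrable_of_Icc hεt
    have hftc := intervalIntegral.integral_eq_sub_of_hasDerivAt hg hii
    have hfi : IntervalIntegrable f volume ε t :=
      (hfcont.mono hIcc).intervalIntegrable_of_Icc hεt
    constructor
    · rw [← hftc, show (2*(1+ia)) * ∫ τ in ε..t, f τ = ∫ τ in ε..t, 2*(1+ia) * f τ from
        (intervalIntegral.integral_const_mul _ _).symm]
      apply intervalIntegral.integral_mono_on hεt (hfi.const_mul _) hii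
      intro x hx
      have hx0 : (0:ℝ) < x := hIcc hx
      have h1 := hlow x hx0
      have ha := hapos x hx0
      simp only [hfdef]
      nlinarith [mul_nonneg (mul_nonneg hx0.le ha.le) (sub_nonneg.mpr h1)]
    · rw [← hftc, show (2*(1+sa)) * ∫ τ in ε..t, f τ = ∫ τ in ε..t, 2*(1+sa) * f τ from
        (intervalIntegral.integral_const_mul _ _).symm]
      apply intervalIntegral.integral_mono_on hεt hii (hfi.const_mul _)
      intro x hx
      have hx0 : (0:ℝ) < x := hIcc hx
      have h1 := hupp x hx0
      have ha := hapos x hx0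
      simp only [hfdef]
      nlinarith [mul_nonneg (mul_nonneg hx0.le ha.le) (sub_nonneg.mpr h1)]
  -- limit of the integral as ε → 0⁺
  have hfi0 : IntervalIntegrable f volume 0 t := hfii0 t ht
  have hPrim : Tendsto (fun ε => ∫ τ in ε..t, f τ) (𝓝[>] (0:ℝ))
      (𝓝 (∫ τ in (0:ℝ)..t, f τ)) := by
    have hc : ContinuousOn (fun x => ∫ τ in (0:ℝ)..x, f τ) (Set.uIcc 0 t) := by
      apply intervalIntegral.continuousOn_primitive_interval
      rw [Set.uIcc_of_le ht.le, integrableOn_Icc_iff_integrableOn_Ioc]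
      exact hfint t ht
    have hP : Tendsto (fun x => ∫ τ in (0:ℝ)..x, f τ) (𝓝[>] (0:ℝ)) (𝓝 0) := by
      have h1 := (hc 0 Set.left_mem_uIcc).tendsto
      rw [intervalIntegral.integral_same] at h1
      refine h1.mono_left (nhdsWithin_le_of_mem (mem_of_superset hIocmem ?_))
      rw [Set.uIcc_of_le ht.le]
      exact Set.Ioc_subset_Icc_self
    have h2 := (tendsto_const_nhds (x := ∫ τ in (0:ℝ)..t, f τ)
      (f := 𝓝[>] (0:ℝ))).sub hP
    rw [sub_zero] at h2
    apply h2.congr'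
    filter_upwards [hIocmem] with ε hε
    exact intervalIntegral.integral_interval_sub_left hfi0
      ((intervalIntegrable_iff_integrableOn_Ioc_of_le hε.1.le).mpr
        ((hfint t ht).mono_set (Set.Ioc_subset_Ioc_right hε.2)))
  -- limit of (ε a ε)² as ε → 0⁺
  have hg0 : Tendsto (fun ε => (ε * a ε)^2) (𝓝[>] (0:ℝ)) (𝓝 0) := by
    have hr : Tendsto (fun ε : ℝ => A^2 * ε ^ (2 + 2*ia)) (𝓝[>] (0:ℝ)) (𝓝 0) := by
      have hc := (Real.continuousAt_rpow_const 0 (2+2*ia) (Or.inr (by linarith))).tendsto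
      rw [Real.zero_rpow (by linarith : (2+2*ia) ≠ 0)] at hc
      have h3 : Tendsto (fun ε : ℝ => ε ^ (2 + 2*ia)) (𝓝[>] (0:ℝ)) (𝓝 0) :=
        hc.mono_left nhdsWithin_le_nhds
      have h4 := h3.const_mul (A^2)
      simpa using h4
    apply squeeze_zero' ?_ ?_ hr
    · filter_upwards with ε using sq_nonneg _
    · filter_upwards [Ioc_mem_nhdsGT_of_mem ⟨le_refl (0:ℝ), one_pos⟩] with ε hε
      have hb := habd ε hε
      have ha := hapos ε hε.1
      have e1 : ε ^ (1+ia) * ε ^ (1+ia) = ε ^ (2+2*ia) := by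
        rw [← Real.rpow_add hε.1]; ring_nf
      have e2 : ε ^ (1+ia) = ε * ε ^ ia := by rw [Real.rpow_add hε.1, Real.rpow_one]
      have h1 : ε * a ε ≤ A * ε ^ (1+ia) := by
        rw [e2]
        calc ε * a ε ≤ ε * (A * ε ^ ia) := by nlinarith [hb, hε.1]
        _ = A * (ε * ε ^ ia) := by ring
      have h2 : 0 ≤ ε * a ε := mul_nonneg hε.1.le ha.le
      rw [← e1]
      nlinarith [mul_self_le_mul_self h2 h1]
  constructor
  · have hmain : ∀ᶠ ε in 𝓝[>] (0:ℝ),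
        2*(1+ia) * ∫ τ in ε..t, f τ ≤ (t*a t)^2 - (ε*a ε)^2 := by
      filter_upwards [hIocmem] with ε hε using (key ε hε).1
    have hlhs := hPrim.const_mul (2*(1+ia))
    have hrhs : Tendsto (fun ε => (t*a t)^2 - (ε*a ε)^2) (𝓝[>] (0:ℝ))
        (𝓝 ((t*a t)^2 - 0)) := tendsto_const_nhds.sub hg0
    have := le_of_tendsto_of_tendsto hlhs hrhs hmain
    simpa using this
  · have hmain : ∀ᶠ ε in 𝓝[>] (0:ℝ),
        (t*a t)^2 - (ε*a ε)^2 ≤ 2*(1+sa) * ∫ τ in ε..t, f τ := by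
      filter_upwards [hIocmem] with ε hε using (key ε hε).2
    have hrhs := hPrim.const_mul (2*(1+sa))
    have hlhs : Tendsto (fun ε => (t*a t)^2 - (ε*a ε)^2) (𝓝[>] (0:ℝ))
        (𝓝 ((t*a t)^2 - 0)) := tendsto_const_nhds.sub hg0
    have := le_of_tendsto_of_tendsto hlhs hrhs hmain
    simpa using this
end

section
/- Let $a : (0,\infty)\to(0,\infty)$ be $C^1$ with $-1 < i_a \le s_a < \infty$. Then for all $\xi, \eta \in \mathbb{R}^{Nn}$, $[a(|\xi|)\xi - a(|\eta|)\eta] \cdot (\xi - \eta) \ge (1+\min\{i_a,0\})\, |\xi - \eta|^2 \int_0^1 a(|\eta + s(\xi - \eta)|)\,ds$. -/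
open MeasureTheory Set

lemma aux_abs_rpow_intInt {r : ℝ} (hr : -1 < r) (c d : ℝ) :
    IntervalIntegrable (fun x => |x| ^ r) volume c d := by
  have key0 : ∀ e : ℝ, 0 ≤ e → IntervalIntegrable (fun x => |x| ^ r) volume 0 e := by
    intro e he
    refine (intervalIntegral.intervalIntegrable_rpow' hr (a := 0) (b := e)).congr ?_
    intro x hx
    rw [uIoc_of_le he] at hx
    show x ^ r = |x| ^ r
    rw [abs_of_pos hx.1]
  have key : ∀ e : ℝ, IntervalIntegrable (fun x => |x| ^ r) volume 0 e := by
    intro e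
    rcases le_or_gt 0 e with he | he
    · exact key0 e he
    · have := (IntervalIntegrable.iff_comp_neg (by simp)).mp (key0 (-e) (by linarith))
      simpa using this
  exact (key c).symm.trans (key d)

lemma aux_growth (a : ℝ → ℝ) (hapos : ∀ t > 0, 0 < a t)
    (hd : ∀ t > 0, HasDerivAt a (deriv a t) t)
    (ia sa : ℝ)
    (hinf : ∀ t > 0, ia ≤ t * deriv a t / a t)
    (hsup : ∀ t > 0, t * deriv a t / a t ≤ sa) :
    ∀ t > 0, a t ≤ a 1 * (t ^ ia + t ^ sa) := by
  have hφ : ∀ b : ℝ, ∀ t > (0:ℝ), HasDerivAt (fun t => a t * t ^ (-b))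
      (t ^ (-b - 1) * (t * deriv a t - b * a t)) t := by
    intro b t ht
    have h1 := (hd t ht).mul (Real.hasDerivAt_rpow_const (x := t) (p := -b) (Or.inl (ne_of_gt ht)))
    simp only [Pi.mul_def] at h1
    refine h1.congr_deriv ?_
    have ht' : t ^ (-b) = t ^ (-b - 1) * t := by
      rw [← Real.rpow_add_one (ne_of_gt ht) (-b - 1)]
      norm_num
    rw [ht']; ring
  have hmono : MonotoneOn (fun t => a t * t ^ (-ia)) (Ioi 0) := by
    apply monotoneOn_of_deriv_nonneg (convex_Ioi 0)
    · exact fun t ht => ((hφ ia t ht).continuousAt.continuousWithinAt)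
    · rw [interior_Ioi]
      exact fun t ht => (hφ ia t ht).differentiableAt.differentiableWithinAt
    · intro t ht
      rw [interior_Ioi] at ht
      rw [(hφ ia t ht).deriv]
      have h2 : ia * a t ≤ t * deriv a t := by
        have h := hinf t ht
        rwa [le_div_iff₀ (hapos t ht)] at h
      have h3 : (0:ℝ) ≤ t ^ (-ia - 1) := Real.rpow_nonneg (le_of_lt ht) _
      nlinarith
  have hanti : AntitoneOn (fun t => a t * t ^ (-sa)) (Ioi 0) := by
    apply antitoneOn_of_deriv_nonpos (convex_Ioi 0)
    · exact fun t ht => ((hφ sa t ht).continuousAt.continuousWithinAt)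
    · rw [interior_Ioi]
      exact fun t ht => (hφ sa t ht).differentiableAt.differentiableWithinAt
    · intro t ht
      rw [interior_Ioi] at ht
      rw [(hφ sa t ht).deriv]
      have h2 : t * deriv a t ≤ sa * a t := by
        have h := hsup t ht
        rwa [div_le_iff₀ (hapos t ht)] at h
      have h3 : (0:ℝ) ≤ t ^ (-sa - 1) := Real.rpow_nonneg (le_of_lt ht) _
      nlinarith
  intro t ht
  have h1pos : (0:ℝ) < a 1 := hapos 1 one_pos
  rcases le_or_gt t 1 with h | h
  · have hle := hmono (mem_Ioi.mpr ht) (mem_Ioi.mpr one_pos) h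
    simp only [Real.one_rpow, mul_one] at hle
    have hpow : (0:ℝ) < t ^ ia := Real.rpow_pos_of_pos ht _
    have hmul : a t = (a t * t ^ (-ia)) * t ^ ia := by
      rw [mul_assoc, ← Real.rpow_add ht]
      simp
    have h4 : a t ≤ a 1 * t ^ ia := by
      rw [hmul]
      exact mul_le_mul_of_nonneg_right hle hpow.le
    have h5 : (0:ℝ) ≤ t ^ sa := (Real.rpow_pos_of_pos ht _).le
    nlinarith
  · have hle := hanti (mem_Ioi.mpr one_pos) (mem_Ioi.mpr ht) h.le
    simp only [Real.one_rpow, mul_one] at hle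
    have hpow : (0:ℝ) < t ^ sa := Real.rpow_pos_of_pos ht _
    have hmul : a t = (a t * t ^ (-sa)) * t ^ sa := by
      rw [mul_assoc, ← Real.rpow_add ht]
      simp
    have h4 : a t ≤ a 1 * t ^ sa := by
      rw [hmul]
      exact mul_le_mul_of_nonneg_right hle hpow.le
    have h5 : (0:ℝ) ≤ t ^ ia := (Real.rpow_pos_of_pos ht _).le
    nlinarith

set_option maxHeartbeats 1000000 in
theorem stmt_7 (N n : ℕ) (a : ℝ → ℝ) (hapos : ∀ t > 0, 0 < a t)
    (haC1 : ContDiffOn ℝ 1 a (Set.Ioi 0))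
    (ia sa : ℝ) (hia : -1 < ia) (hisa : ia ≤ sa)
    (hinf : ∀ t > 0, ia ≤ t * deriv a t / a t)
    (hsup : ∀ t > 0, t * deriv a t / a t ≤ sa)
    (A : EuclideanSpace ℝ (Fin N × Fin n) → EuclideanSpace ℝ (Fin N × Fin n))
    (hA : ∀ ξ, ξ ≠ 0 → A ξ = a ‖ξ‖ • ξ) (hA0 : A 0 = 0)
    (ξ η : EuclideanSpace ℝ (Fin N × Fin n)) :
    (inner ℝ (A ξ - A η) (ξ - η) : ℝ) ≥
      (1 + min ia 0) * ‖ξ - η‖^2 * ∫ s in (0:ℝ)..1, a ‖η + s • (ξ - η)‖ := by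
  by_cases hvz : ξ - η = 0
  · rw [hvz]
    simp
  set v := ξ - η with hv
  have hvne : v ≠ 0 := hvz
  have hvpos : (0:ℝ) < ‖v‖ := norm_pos_iff.mpr hvne
  set c : ℝ := 1 + min ia 0 with hcdef
  have hcpos : 0 < c := by
    have : -1 < min ia 0 := lt_min hia (by norm_num)
    rw [hcdef]; linarith
  have hc1 : c ≤ 1 := by
    have := min_le_right ia 0
    rw [hcdef]; linarith
  have had : ∀ t > (0:ℝ), HasDerivAt a (deriv a t) t := by
    intro t ht
    exact ((haC1.differentiableOn one_ne_zero t ht).differentiableAt (Ioi_mem_nhds ht)).hasDerivAt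
  have hgrow := aux_growth a hapos had ia sa hinf hsup
  set γ : ℝ → EuclideanSpace ℝ (Fin N × Fin n) := fun s => η + s • v with hγdef
  have hγd : ∀ s : ℝ, HasDerivAt γ v s := by
    intro s
    rw [hγdef]
    simpa using ((hasDerivAt_id s).smul_const v).const_add η
  have hγcont : Continuous γ := by
    rw [hγdef]; continuity
  -- derivative of norm of γ
  have hrd : ∀ s, γ s ≠ 0 → HasDerivAt (fun u => ‖γ u‖) ((inner ℝ (γ s) v : ℝ) / ‖γ s‖) s := by
    intro s hs
    have hq : HasDerivAt (fun u => (inner ℝ (γ u) (γ u) : ℝ)) (2 * (inner ℝ (γ s) v : ℝ)) s := by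
      have h := HasDerivAt.inner ℝ (hγd s) (hγd s)
      have h2 : (inner ℝ (γ s) v : ℝ) + (inner ℝ v (γ s) : ℝ) = 2 * (inner ℝ (γ s) v : ℝ) := by
        rw [real_inner_comm v (γ s)]; ring
      rw [h2] at h
      exact h
    have hrs : (0:ℝ) < ‖γ s‖ := norm_pos_iff.mpr hs
    have hqpos : (inner ℝ (γ s) (γ s) : ℝ) ≠ 0 := by
      rw [real_inner_self_eq_norm_sq]
      positivity
    have h2 := (Real.hasDerivAt_sqrt hqpos).comp s hq
    have hsq : ∀ u : ℝ, Real.sqrt (inner ℝ (γ u) (γ u) : ℝ) = ‖γ u‖ := by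
      intro u
      rw [real_inner_self_eq_norm_sq, Real.sqrt_sq (norm_nonneg _)]
    simp only [Function.comp_def, hsq] at h2
    refine h2.congr_deriv ?_
    field_simp
  have hp : ∀ s : ℝ, HasDerivAt (fun u => (inner ℝ (γ u) v : ℝ)) (‖v‖^2) s := by
    intro s
    have h := HasDerivAt.inner ℝ (hγd s) (hasDerivAt_const s v)
    have h2 : (inner ℝ (γ s) (0 : EuclideanSpace ℝ (Fin N × Fin n)) : ℝ) + (inner ℝ v v : ℝ)
        = ‖v‖^2 := by
      rw [inner_zero_right, real_inner_self_eq_norm_sq, zero_add]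
    rw [h2] at h
    exact h
  set f : ℝ → ℝ := fun s => a ‖γ s‖ * (inner ℝ (γ s) v : ℝ) with hfdef
  set F : ℝ → ℝ := fun s => a ‖γ s‖ * ‖v‖^2 + deriv a ‖γ s‖ * (inner ℝ (γ s) v : ℝ)^2 / ‖γ s‖
    with hFdef
  have hfd : ∀ s, γ s ≠ 0 → HasDerivAt f (F s) s := by
    intro s hs
    have hrs : (0:ℝ) < ‖γ s‖ := norm_pos_iff.mpr hs
    have h1 : HasDerivAt (fun u => a ‖γ u‖)
        (deriv a ‖γ s‖ * ((inner ℝ (γ s) v : ℝ) / ‖γ s‖)) s := by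
      have := (had _ hrs).comp s (hrd s hs)
      simpa [Function.comp_def] using this
    have h2 := h1.mul (hp s)
    rw [hfdef, hFdef]
    refine h2.congr_deriv ?_
    field_simp
    ring
  have hfz : ∀ s, γ s = 0 → f s = 0 := by
    intro s hs
    simp [hfdef, hs]
  have hfcont : Continuous f := by
    rw [continuous_iff_continuousAt]
    intro s
    by_cases hs : γ s = 0
    · have hne : (0:ℝ) < 1 + ia := by linarith
      have hne' : (0:ℝ) < 1 + sa := by linarith
      have hbd : ∀ u, ‖f u‖ ≤ a 1 * (‖γ u‖ ^ (1+ia) + ‖γ u‖ ^ (1+sa)) * ‖v‖ := by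
        intro u
        by_cases hu : γ u = 0
        · rw [hfz u hu, hu]
          simp [Real.zero_rpow (ne_of_gt hne), Real.zero_rpow (ne_of_gt hne')]
        · have hru : (0:ℝ) < ‖γ u‖ := norm_pos_iff.mpr hu
          have h1 : |(inner ℝ (γ u) v : ℝ)| ≤ ‖γ u‖ * ‖v‖ := abs_real_inner_le_norm _ _
          have h2 : a ‖γ u‖ ≤ a 1 * (‖γ u‖ ^ ia + ‖γ u‖ ^ sa) := hgrow _ hru
          have ha' : 0 < a ‖γ u‖ := hapos _ hru
          rw [hfdef, Real.norm_eq_abs, abs_mul, abs_of_pos ha']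
          have e1 : ‖γ u‖ ^ (1+ia) = ‖γ u‖ * ‖γ u‖ ^ ia := by
            rw [Real.rpow_add hru, Real.rpow_one]
          have e2 : ‖γ u‖ ^ (1+sa) = ‖γ u‖ * ‖γ u‖ ^ sa := by
            rw [Real.rpow_add hru, Real.rpow_one]
          calc a ‖γ u‖ * |(inner ℝ (γ u) v : ℝ)| ≤ a ‖γ u‖ * (‖γ u‖ * ‖v‖) :=
                mul_le_mul_of_nonneg_left h1 ha'.le
            _ ≤ (a 1 * (‖γ u‖ ^ ia + ‖γ u‖ ^ sa)) * (‖γ u‖ * ‖v‖) :=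
                mul_le_mul_of_nonneg_right h2 (by positivity)
            _ = a 1 * (‖γ u‖ ^ (1+ia) + ‖γ u‖ ^ (1+sa)) * ‖v‖ := by
                rw [e1, e2]; ring
      have hγ0 : Filter.Tendsto (fun u => ‖γ u‖) (nhds s) (nhds 0) := by
        have h := (hγcont.norm).continuousAt (x := s)
        rw [ContinuousAt] at h
        simpa [hs] using h
      have t1 : Filter.Tendsto (fun u => ‖γ u‖ ^ (1+ia)) (nhds s) (nhds 0) := by
        have hc := (Real.continuousAt_rpow_const 0 (1+ia) (Or.inr (by linarith))).tendsto
        have := hc.comp hγ0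
        simpa [Real.zero_rpow (ne_of_gt hne), Function.comp_def] using this
      have t2 : Filter.Tendsto (fun u => ‖γ u‖ ^ (1+sa)) (nhds s) (nhds 0) := by
        have hc := (Real.continuousAt_rpow_const 0 (1+sa) (Or.inr (by linarith))).tendsto
        have := hc.comp hγ0
        simpa [Real.zero_rpow (ne_of_gt hne'), Function.comp_def] using this
      have hlim := ((t1.add t2).const_mul (a 1)).mul_const ‖v‖
      simp only [add_zero, mul_zero, zero_mul] at hlim
      have hten : Filter.Tendsto f (nhds s) (nhds 0) := squeeze_zero_norm hbd hlim
      rw [ContinuousAt, hfz s hs]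
      exact hten
    · exact (hfd s hs).continuousAt
  -- lower bound on F
  have hlow : ∀ s, γ s ≠ 0 → c * ‖v‖^2 * a ‖γ s‖ ≤ F s := by
    intro s hs
    have hrs : (0:ℝ) < ‖γ s‖ := norm_pos_iff.mpr hs
    have har : 0 < a ‖γ s‖ := hapos _ hrs
    have hp2 : (inner ℝ (γ s) v : ℝ)^2 ≤ ‖γ s‖^2 * ‖v‖^2 := by
      have h := abs_real_inner_le_norm (γ s) v
      have h2 : (inner ℝ (γ s) v : ℝ)^2 = |(inner ℝ (γ s) v : ℝ)|^2 := (sq_abs _).symm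
      rw [h2]
      nlinarith [abs_nonneg (inner ℝ (γ s) v : ℝ), norm_nonneg (γ s), norm_nonneg v]
    simp only [hFdef]
    set r := ‖γ s‖ with hrdef
    set p := (inner ℝ (γ s) v : ℝ) with hpdef
    set D := deriv a r with hDdef
    rcases le_or_gt 0 D with hda | hda
    · have h3 : 0 ≤ D * p^2 / r := by positivity
      nlinarith [mul_pos har (mul_pos hvpos hvpos), sq_nonneg ‖v‖,
        mul_nonneg har.le (sq_nonneg ‖v‖)]
    · have hianeg : ia < 0 := by
        have h1 := hinf r hrs
        have h2 : r * D / a r < 0 := by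
          apply div_neg_of_neg_of_pos _ har
          exact mul_neg_of_pos_of_neg hrs hda
        linarith
      have hmin : min ia 0 = ia := min_eq_left hianeg.le
      have hkey : ia * a r ≤ r * D := by
        have h : ia ≤ r * D / a r := hinf r hrs
        rwa [le_div_iff₀ har] at h
      have h3 : D * (r^2 * ‖v‖^2) ≤ D * p^2 := by
        nlinarith
      have h4 : ia * a r * ‖v‖^2 * r ≤ D * p^2 := by
        nlinarith [sq_nonneg ‖v‖]
      have h5 : ia * a r * ‖v‖^2 ≤ D * p^2 / r :=
        (le_div_iff₀ hrs).mpr h4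
      rw [hcdef, hmin]
      nlinarith
  -- integrability
  have Hint : IntegrableOn (fun s => a ‖γ s‖) (Icc (0:ℝ) 1) volume := by
    by_cases hz : ∀ s ∈ Icc (0:ℝ) 1, γ s ≠ 0
    · apply ContinuousOn.integrableOn_Icc
      apply ContinuousOn.comp haC1.continuousOn (hγcont.norm.continuousOn)
      intro s hs
      exact mem_Ioi.mpr (norm_pos_iff.mpr (hz s hs))
    · push_neg at hz
      obtain ⟨s₀, hs₀mem, hs₀⟩ := hz
      have hrs : ∀ s, ‖γ s‖ = ‖v‖ * |s - s₀| := by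
        intro s
        have hγs : γ s = (s - s₀) • v := by
          have h1 : γ s = γ s₀ + (s - s₀) • v := by
            rw [hγdef]
            simp only [sub_smul]
            abel
          rw [h1, hs₀, zero_add]
        rw [hγs, norm_smul, Real.norm_eq_abs, mul_comm]
      have hGint : IntegrableOn
          (fun s => a 1 * (‖v‖^ia * |s - s₀| ^ ia + ‖v‖^sa * |s - s₀| ^ sa))
          (Icc (0:ℝ) 1) volume := by
        have i1 : IntervalIntegrable (fun s => |s - s₀| ^ ia) volume 0 1 := by
          have := (aux_abs_rpow_intInt hia (0 - s₀) (1 - s₀)).comp_sub_right s₀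
          simpa using this
        have i2 : IntervalIntegrable (fun s => |s - s₀| ^ sa) volume 0 1 := by
          have := (aux_abs_rpow_intInt (lt_of_lt_of_le hia hisa) (0 - s₀) (1 - s₀)).comp_sub_right s₀
          simpa using this
        have h := ((i1.const_mul (‖v‖^ia)).add (i2.const_mul (‖v‖^sa))).const_mul (a 1)
        rw [integrableOn_Icc_iff_integrableOn_Ioc]
        exact (intervalIntegrable_iff_integrableOn_Ioc_of_le zero_le_one).mp h
      have hmeas : AEStronglyMeasurable (fun s => a ‖γ s‖) (volume.restrict (Icc (0:ℝ) 1)) := by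
        have hcont2 : ContinuousOn (fun s => a ‖γ s‖) ({s₀}ᶜ) := by
          apply ContinuousOn.comp haC1.continuousOn (hγcont.norm.continuousOn)
          intro s hs
          rw [mem_compl_singleton_iff] at hs
          rw [mem_Ioi]
          show (0:ℝ) < ‖γ s‖
          rw [hrs]
          exact mul_pos hvpos (abs_pos.mpr (sub_ne_zero.mpr hs))
        have h1 : AEStronglyMeasurable (fun s => a ‖γ s‖) (volume.restrict ({s₀}ᶜ)) :=
          hcont2.aestronglyMeasurable (measurableSet_singleton s₀).compl
        have h2 : (volume : Measure ℝ).restrict ({s₀}ᶜ) = volume := by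
          rw [Measure.restrict_congr_set (t := univ) (by
            rw [ae_eq_univ, compl_compl]
            exact measure_singleton s₀), Measure.restrict_univ]
        have h3 : AEStronglyMeasurable (fun s => a ‖γ s‖) (volume : Measure ℝ) := h2 ▸ h1
        exact h3.restrict
      apply Integrable.mono' hGint hmeas
      have hae : ∀ᵐ s ∂(volume.restrict (Icc (0:ℝ) 1)), s ≠ s₀ := by
        apply Filter.Eventually.filter_mono (ae_mono Measure.restrict_le_self)
        rw [MeasureTheory.ae_iff]
        simp only [ne_eq, not_not, setOf_eq_eq_singleton]
        exact measure_singleton s₀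
      filter_upwards [hae] with s hsne
      have hpos : (0:ℝ) < ‖γ s‖ := by
        rw [hrs]
        exact mul_pos hvpos (abs_pos.mpr (sub_ne_zero.mpr hsne))
      rw [Real.norm_eq_abs, abs_of_pos (hapos _ hpos)]
      calc a ‖γ s‖ ≤ a 1 * (‖γ s‖^ia + ‖γ s‖^sa) := hgrow _ hpos
        _ = a 1 * (‖v‖^ia * |s-s₀|^ia + ‖v‖^sa * |s-s₀|^sa) := by
          rw [hrs, Real.mul_rpow (norm_nonneg v) (abs_nonneg _),
            Real.mul_rpow (norm_nonneg v) (abs_nonneg _)]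
  -- key FTC inequality
  have key : ∀ u w : ℝ, 0 ≤ u → u ≤ w → w ≤ 1 → (∀ s ∈ Ioo u w, γ s ≠ 0) →
      (∫ s in u..w, c * ‖v‖^2 * a ‖γ s‖) ≤ f w - f u := by
    intro u w hu huw hw hne
    apply intervalIntegral.integral_le_sub_of_hasDeriv_right_of_le huw
      (hfcont.continuousOn)
      (fun x hx => (hfd x (hne x hx)).hasDerivWithinAt)
      ((Hint.mono_set (Icc_subset_Icc hu hw)).const_mul _)
      (fun x hx => hlow x (hne x hx))
  have huniq : ∀ s t : ℝ, γ s = 0 → γ t = 0 → s = t := by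
    intro s t hs ht
    have h1 : γ s - γ t = (s - t) • v := by
      rw [hγdef]
      simp only [sub_smul]
      abel
    rw [hs, ht, sub_zero] at h1
    rcases smul_eq_zero.mp h1.symm with h | h
    · linarith [sub_eq_zero.mp h]
    · exact absurd h hvne
  have hsplit : (∫ s in (0:ℝ)..1, c * ‖v‖^2 * a ‖γ s‖) ≤ f 1 - f 0 := by
    by_cases hz : ∀ s ∈ Ioo (0:ℝ) 1, γ s ≠ 0
    · exact key 0 1 le_rfl zero_le_one le_rfl hz
    · push_neg at hz
      obtain ⟨s₀, hs₀mem, hs₀⟩ := hz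
      have k1 := key 0 s₀ le_rfl hs₀mem.1.le hs₀mem.2.le
        (fun s hs h => absurd (huniq s s₀ h hs₀) (ne_of_lt hs.2))
      have k2 := key s₀ 1 hs₀mem.1.le hs₀mem.2.le le_rfl
        (fun s hs h => absurd (huniq s s₀ h hs₀) (ne_of_gt hs.1))
      have i1 : IntervalIntegrable (fun s => c * ‖v‖^2 * a ‖γ s‖) volume 0 s₀ := by
        rw [intervalIntegrable_iff_integrableOn_Ioc_of_le hs₀mem.1.le]
        exact (Hint.mono_set (Ioc_subset_Icc_self.trans (Icc_subset_Icc le_rfl hs₀mem.2.le))).const_mul _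
      have i2 : IntervalIntegrable (fun s => c * ‖v‖^2 * a ‖γ s‖) volume s₀ 1 := by
        rw [intervalIntegrable_iff_integrableOn_Ioc_of_le hs₀mem.2.le]
        exact (Hint.mono_set (Ioc_subset_Icc_self.trans (Icc_subset_Icc hs₀mem.1.le le_rfl))).const_mul _
      have hadd := intervalIntegral.integral_add_adjacent_intervals i1 i2
      linarith
  have hγ1 : γ 1 = ξ := by
    rw [hγdef]
    simp [hv]
  have hγ0 : γ 0 = η := by
    rw [hγdef]; simp
  have hf1 : f 1 = (inner ℝ (A ξ) v : ℝ) := by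
    by_cases hξ : ξ = 0
    · rw [hfdef]
      simp only [hγ1, hξ, hA0]
      simp
    · rw [hA ξ hξ, real_inner_smul_left, hfdef]
      simp only [hγ1]
  have hf0 : f 0 = (inner ℝ (A η) v : ℝ) := by
    by_cases hη : η = 0
    · rw [hfdef]
      simp only [hγ0, hη, hA0]
      simp
    · rw [hA η hη, real_inner_smul_left, hfdef]
      simp only [hγ0]
  have hL : (inner ℝ (A ξ - A η) v : ℝ) = f 1 - f 0 := by
    rw [inner_sub_left, hf1, hf0]
  rw [ge_iff_le, hL]
  have hCM : (∫ s in (0:ℝ)..1, c * ‖v‖^2 * a ‖η + s • v‖)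
      = c * ‖v‖^2 * ∫ s in (0:ℝ)..1, a ‖η + s • v‖ :=
    intervalIntegral.integral_const_mul _ _
  rw [← hCM]
  simpa only [hγdef] using hsplit
end

section
/- Let $a : (0,\infty)\to(0,\infty)$ be non-decreasing. Then for all $\xi, \eta \in \mathbb{R}^{Nn}\setminus\{0\}$: $[a(|\xi|)\xi - a(|\eta|)\eta]\cdot(\xi - \eta) \ge \frac{1}{3}\,[a(|\xi|)+a(|\eta|)]\,|\xi-\eta|^2$. -/
lemma stmt_8_aux (N n : ℕ) (a : ℝ → ℝ) (hapos : ∀ t > 0, 0 < a t)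
    (hmono : ∀ s t : ℝ, 0 < s → s ≤ t → a s ≤ a t)
    (ξ η : EuclideanSpace ℝ (Fin N × Fin n)) (hξ : ξ ≠ 0) (hη : η ≠ 0)
    (hyx : ‖η‖ ≤ ‖ξ‖) :
    (inner ℝ (a ‖ξ‖ • ξ - a ‖η‖ • η) (ξ - η) : ℝ) ≥
      (1/3) * (a ‖ξ‖ + a ‖η‖) * ‖ξ - η‖^2 := by
  set x := ‖ξ‖ with hxdef
  set y := ‖η‖ with hydef
  set A := a x with hAdef
  set B := a y with hBdef
  set p : ℝ := inner ℝ ξ η with hpdef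
  have hx : 0 < x := norm_pos_iff.2 hξ
  have hy : 0 < y := norm_pos_iff.2 hη
  have hA : 0 < A := hapos x hx
  have hB : 0 < B := hapos y hy
  have hAB : B ≤ A := hmono y x hy hyx
  have hp : p ≤ x * y := real_inner_le_norm ξ η
  have hcomm : (inner ℝ η ξ : ℝ) = p := by rw [hpdef]; exact real_inner_comm ξ η
  have hsq : ‖ξ - η‖^2 = x^2 - 2*p + y^2 := by
    rw [← real_inner_self_eq_norm_sq, inner_sub_left, inner_sub_right, inner_sub_right,
      real_inner_self_eq_norm_sq, real_inner_self_eq_norm_sq, hcomm, ← hpdef]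
    ring
  have hinner : (inner ℝ (A • ξ - B • η) (ξ - η) : ℝ)
      = A * x^2 - (A+B)*p + B * y^2 := by
    rw [inner_sub_left, inner_sub_right, inner_sub_right,
      real_inner_smul_left, real_inner_smul_left, real_inner_smul_left,
      real_inner_smul_left, real_inner_self_eq_norm_sq,
      real_inner_self_eq_norm_sq, hcomm, ← hpdef]
    ring
  rw [hinner, hsq, ge_iff_le]
  have e1 : 0 ≤ (x - y) * ((2*A - B)*x + (A - 2*B)*y) := by
    apply mul_nonneg (by linarith)
    nlinarith [mul_nonneg (by linarith : (0:ℝ) ≤ 2*A - B) (by linarith : (0:ℝ) ≤ x - y),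
      mul_nonneg (by linarith : (0:ℝ) ≤ A - B) hy.le]
  have e2 : 0 ≤ (A + B) * (x*y - p) := mul_nonneg (by linarith) (by linarith)
  nlinarith [e1, e2]

theorem stmt_8 (N n : ℕ) (a : ℝ → ℝ) (hapos : ∀ t > 0, 0 < a t)
    (hmono : ∀ s t : ℝ, 0 < s → s ≤ t → a s ≤ a t)
    (ξ η : EuclideanSpace ℝ (Fin N × Fin n)) (hξ : ξ ≠ 0) (hη : η ≠ 0) :
    (inner ℝ (a ‖ξ‖ • ξ - a ‖η‖ • η) (ξ - η) : ℝ) ≥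
      (1/3) * (a ‖ξ‖ + a ‖η‖) * ‖ξ - η‖^2 := by
  rcases le_total ‖η‖ ‖ξ‖ with h | h
  · exact stmt_8_aux N n a hapos hmono ξ η hξ hη h
  · have := stmt_8_aux N n a hapos hmono η ξ hη hξ h
    have h1 : (inner ℝ (a ‖η‖ • η - a ‖ξ‖ • ξ) (η - ξ) : ℝ)
        = inner ℝ (a ‖ξ‖ • ξ - a ‖η‖ • η) (ξ - η) := by
      rw [show a ‖η‖ • η - a ‖ξ‖ • ξ = -(a ‖ξ‖ • ξ - a ‖η‖ • η) by abel,
        show η - ξ = -(ξ - η) by abel, inner_neg_neg]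
    rw [h1, norm_sub_rev η ξ] at this
    linarith
end

section
/- Let $a : (0,\infty)\to(0,\infty)$ be $C^1$, monotone, with $-1 < i_a \le s_a < \infty$. Then for every $t, \tau > 0$ there exists $\vartheta > 0$ such that $[a(|\xi|)\xi - a(|\eta|)\eta]\cdot(\xi-\eta) > \vartheta$ for all $\xi, \eta \in \mathbb{R}^{Nn}$ with $|\xi - \eta| \ge t$, $|\xi| \le \tau$, and $|\eta| \le \tau$. -/
open Real Set Filter Topology

theorem stmt_9 (N n : ℕ) (a : ℝ → ℝ) (hapos : ∀ t > 0, 0 < a t)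
    (haC1 : ContDiffOn ℝ 1 a (Set.Ioi 0))
    (hmono : MonotoneOn a (Set.Ioi 0) ∨ AntitoneOn a (Set.Ioi 0))
    (ia sa : ℝ) (hia : -1 < ia) (hisa : ia ≤ sa)
    (hinf : ∀ t > 0, ia ≤ t * deriv a t / a t)
    (hsup : ∀ t > 0, t * deriv a t / a t ≤ sa)
    (A : EuclideanSpace ℝ (Fin N × Fin n) → EuclideanSpace ℝ (Fin N × Fin n))
    (hA : ∀ ξ, ξ ≠ 0 → A ξ = a ‖ξ‖ • ξ) (hA0 : A 0 = 0) :
    ∀ t > (0:ℝ), ∀ τ > (0:ℝ), ∃ θ > (0:ℝ),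
      ∀ ξ η : EuclideanSpace ℝ (Fin N × Fin n),
        t ≤ ‖ξ - η‖ → ‖ξ‖ ≤ τ → ‖η‖ ≤ τ →
          θ < (inner ℝ (A ξ - A η) (ξ - η) : ℝ) := by
  intro t ht τ hτ
  have hA' : ∀ ξ : EuclideanSpace ℝ (Fin N × Fin n), A ξ = a ‖ξ‖ • ξ := by
    intro ξ
    rcases eq_or_ne ξ 0 with rfl | h
    · simp [hA0]
    · exact hA ξ h
  have hda : ∀ s : ℝ, 0 < s → DifferentiableAt ℝ a s := by
    intro s hs
    exact (haC1.differentiableOn one_ne_zero).differentiableAt (isOpen_Ioi.mem_nhds hs)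
  have hconta : ContinuousOn a (Ioi 0) := haC1.continuousOn
  -- g = a s * s is strictly monotone on Ioi 0
  have hgmono : StrictMonoOn (fun s => a s * s) (Ioi (0:ℝ)) := by
    apply strictMonoOn_of_deriv_pos (convex_Ioi 0)
    · exact hconta.mul continuousOn_id
    · intro s hs
      rw [interior_Ioi] at hs
      have hd : HasDerivAt (fun s => a s * s) (deriv a s * s + a s * 1) s :=
        ((hda s hs).hasDerivAt).mul (hasDerivAt_id s)
      rw [hd.deriv]
      have has := hapos s hs
      have h1 := hinf s hs
      rw [le_div_iff₀ has] at h1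
      nlinarith [has, hia, h1]
  -- key scalar positivity
  have hkey : ∀ x y : ℝ, 0 ≤ x → 0 ≤ y → x ≠ y →
      0 < (a x * x - a y * y) * (x - y) := by
    intro x y hx hy hxy
    rcases lt_trichotomy x y with h | h | h
    · rcases eq_or_lt_of_le hx with rfl | hx'
      · have := hapos y h
        nlinarith [mul_pos (mul_pos this h) h]
      · have h2 := hgmono hx' (hx'.trans h) h
        simp only at h2
        nlinarith [mul_pos (sub_pos.mpr h2) (sub_pos.mpr h)]
    · exact absurd h hxy
    · rcases eq_or_lt_of_le hy with rfl | hy'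
      · have := hapos x h
        nlinarith [mul_pos (mul_pos this h) h]
      · have h2 := hgmono hy' (hy'.trans h) h
        simp only at h2
        nlinarith [mul_pos (sub_pos.mpr h2) (sub_pos.mpr h)]
  -- expansion of the inner product
  have expand : ∀ ξ η : EuclideanSpace ℝ (Fin N × Fin n),
      (inner ℝ (A ξ - A η) (ξ - η) : ℝ)
      = a ‖ξ‖ * ‖ξ‖^2 + a ‖η‖ * ‖η‖^2 - (a ‖ξ‖ + a ‖η‖) * inner ℝ ξ η := by
    intro ξ η
    rw [hA' ξ, hA' η]
    simp only [inner_sub_left, inner_sub_right, real_inner_smul_left,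
      real_inner_self_eq_norm_sq, real_inner_comm η ξ]
    ring
  -- positivity off the diagonal
  have hFpos : ∀ ξ η : EuclideanSpace ℝ (Fin N × Fin n), ξ ≠ η →
      0 < (inner ℝ (A ξ - A η) (ξ - η) : ℝ) := by
    intro ξ η hne
    rw [expand]
    rcases eq_or_ne ‖ξ‖ ‖η‖ with heq | hneq
    · have hr : 0 < ‖ξ‖ := by
        rcases (norm_nonneg ξ).lt_or_eq with h | h
        · exact h
        · exfalso
          apply hne
          have hξ0 : ξ = 0 := norm_eq_zero.mp h.symm
          have hη0 : η = 0 := norm_eq_zero.mp (by rw [← heq, ← h])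
          rw [hξ0, hη0]
      have has := hapos ‖ξ‖ hr
      have hsub : (0:ℝ) < ‖ξ - η‖^2 := by
        have h0 : ξ - η ≠ 0 := sub_ne_zero_of_ne hne
        have := norm_pos_iff.mpr h0
        positivity
      have hid : ‖ξ - η‖^2 = ‖ξ‖^2 - 2 * inner ℝ ξ η + ‖η‖^2 := norm_sub_sq_real ξ η
      rw [← heq]
      have hid2 : ‖ξ - η‖^2 = 2*‖ξ‖^2 - 2*(inner ℝ ξ η : ℝ) := by rw [hid, ← heq]; ring
      nlinarith [mul_pos has hsub, hid2]
    · have hk := hkey ‖ξ‖ ‖η‖ (norm_nonneg ξ) (norm_nonneg η) hneq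
      have hip : (inner ℝ ξ η : ℝ) ≤ ‖ξ‖ * ‖η‖ := real_inner_le_norm ξ η
      rcases eq_or_ne ξ 0 with rfl | hξ0
      · simp only [norm_zero, inner_zero_left]
        have hy : 0 < ‖η‖ := lt_of_le_of_ne (norm_nonneg η) (fun h => hneq (by simp [← h]))
        have := hapos ‖η‖ hy
        nlinarith [mul_pos this (mul_pos hy hy)]
      rcases eq_or_ne η 0 with rfl | hη0
      · simp only [norm_zero, inner_zero_right]
        have hx : 0 < ‖ξ‖ := norm_pos_iff.mpr hξ0
        have := hapos ‖ξ‖ hx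
        nlinarith [mul_pos this (mul_pos hx hx)]
      · have hx : 0 < ‖ξ‖ := norm_pos_iff.mpr hξ0
        have hy : 0 < ‖η‖ := norm_pos_iff.mpr hη0
        have hax := hapos ‖ξ‖ hx
        have hay := hapos ‖η‖ hy
        nlinarith [hk, hip, hax, hay]
  -- h = log a - ia log is monotone on Ioi 0
  have hmonoh : MonotoneOn (fun s => Real.log (a s) - ia * Real.log s) (Ioi (0:ℝ)) := by
    apply monotoneOn_of_deriv_nonneg (convex_Ioi 0)
    · apply ContinuousOn.sub
      · exact continuousOn_log.comp hconta (fun s hs => ne_of_gt (hapos s hs))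
      · exact continuousOn_const.mul (continuousOn_log.mono (fun s hs => ne_of_gt hs))
    · intro s hs
      rw [interior_Ioi] at hs
      apply DifferentiableAt.differentiableWithinAt
      exact ((hda s hs).log (ne_of_gt (hapos s hs))).sub
        ((differentiableAt_const ia).mul (Real.differentiableAt_log (ne_of_gt hs)))
    · intro s hs
      rw [interior_Ioi] at hs
      have has := hapos s hs
      have hd : HasDerivAt (fun s => Real.log (a s) - ia * Real.log s)
          (deriv a s / a s - ia * s⁻¹) s :=
        (((hda s hs).hasDerivAt).log (ne_of_gt has)).sub
          ((Real.hasDerivAt_log (ne_of_gt hs)).const_mul ia)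
      rw [hd.deriv, sub_nonneg, mul_comm, ← div_eq_inv_mul, div_le_div_iff₀ hs has]
      have h1 := hinf s hs
      rw [le_div_iff₀ has] at h1
      nlinarith [h1]
  -- bound near zero: a s * s ≤ a 1 * s ^ (1 + ia) for 0 < s ≤ 1
  have hbound : ∀ s : ℝ, 0 < s → s ≤ 1 → a s * s ≤ a 1 * s ^ (1 + ia) := by
    intro s hs hs1
    have h01 : (1:ℝ) ∈ Ioi (0:ℝ) := by norm_num
    have hh := hmonoh (mem_Ioi.mpr hs) h01 hs1
    simp only [Real.log_one, mul_zero, sub_zero] at hh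
    -- log (a s) ≤ log (a 1) + ia * log s
    have has := hapos s hs
    have ha1 := hapos 1 one_pos
    have h2 : a s ≤ a 1 * s ^ ia := by
      have : Real.log (a s) ≤ Real.log (a 1 * s ^ ia) := by
        rw [Real.log_mul (ne_of_gt ha1) (ne_of_gt (Real.rpow_pos_of_pos hs ia)),
          Real.log_rpow hs]
        linarith
      have h3 := Real.exp_le_exp.mpr this
      rwa [Real.exp_log has, Real.exp_log (by positivity)] at h3
    calc a s * s ≤ (a 1 * s ^ ia) * s := by nlinarith
      _ = a 1 * s ^ (1 + ia) := by
          rw [add_comm, Real.rpow_add hs, Real.rpow_one]; ring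
  -- continuity of A
  have hAcont : Continuous A := by
    rw [continuous_iff_continuousAt]
    intro ξ
    rcases eq_or_ne ξ 0 with rfl | hξ
    · rw [ContinuousAt, hA0]
      apply squeeze_zero_norm' (a := fun ξ : EuclideanSpace ℝ (Fin N × Fin n) => a 1 * ‖ξ‖ ^ (1 + ia))
      · have hev : ∀ᶠ ζ : EuclideanSpace ℝ (Fin N × Fin n) in 𝓝 0, ‖ζ‖ ≤ 1 := by
          have := Metric.closedBall_mem_nhds (0 : EuclideanSpace ℝ (Fin N × Fin n)) one_pos
          filter_upwards [this] with ζ hζ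
          simpa using hζ
        filter_upwards [hev] with ζ hζ
        rcases eq_or_ne ζ 0 with rfl | hζ0
        · simp [hA0, Real.zero_rpow (by linarith : (1:ℝ) + ia ≠ 0)]
        · rw [hA' ζ, norm_smul, Real.norm_eq_abs,
            abs_of_pos (hapos _ (norm_pos_iff.mpr hζ0))]
          exact hbound ‖ζ‖ (norm_pos_iff.mpr hζ0) hζ
      · have h0 : Tendsto (fun ζ : EuclideanSpace ℝ (Fin N × Fin n) => a 1 * ‖ζ‖ ^ (1 + ia)) (𝓝 0)
            (𝓝 (a 1 * (0:ℝ) ^ (1 + ia))) := by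
          apply Tendsto.const_mul
          have hc : ContinuousAt (fun x : ℝ => x ^ (1 + ia)) 0 :=
            Real.continuousAt_rpow_const 0 (1 + ia) (Or.inr (by linarith))
          exact hc.tendsto.comp (by simpa using continuous_norm.tendsto (0 : EuclideanSpace ℝ (Fin N × Fin n)))
        simpa [Real.zero_rpow (by linarith : (1:ℝ) + ia ≠ 0)] using h0
    · have hx : 0 < ‖ξ‖ := norm_pos_iff.mpr hξ
      have hca : ContinuousAt a ‖ξ‖ := hconta.continuousAt (isOpen_Ioi.mem_nhds hx)
      have : ContinuousAt (fun ζ : EuclideanSpace ℝ (Fin N × Fin n) => a ‖ζ‖ • ζ) ξ :=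
        ContinuousAt.smul (hca.comp continuous_norm.continuousAt) continuousAt_id
    -- A equals this everywhere
      exact this.congr (Eventually.of_forall (fun ζ => (hA' ζ).symm))
  -- compactness argument
  set F : EuclideanSpace ℝ (Fin N × Fin n) × EuclideanSpace ℝ (Fin N × Fin n) → ℝ :=
    fun p => inner ℝ (A p.1 - A p.2) (p.1 - p.2)
  have hFcont : Continuous F := by
    apply Continuous.inner
    · exact (hAcont.comp continuous_fst).sub (hAcont.comp continuous_snd)
    · exact continuous_fst.sub continuous_snd
  set K : Set (EuclideanSpace ℝ (Fin N × Fin n) × EuclideanSpace ℝ (Fin N × Fin n)) :=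
    {p | t ≤ ‖p.1 - p.2‖ ∧ ‖p.1‖ ≤ τ ∧ ‖p.2‖ ≤ τ}
  have hKc : IsCompact K := by
    have hsub : K ⊆ (Metric.closedBall 0 τ) ×ˢ (Metric.closedBall 0 τ) := by
      rintro ⟨ξ, η⟩ ⟨_, h1, h2⟩
      constructor <;> simpa [Metric.mem_closedBall, dist_zero_right]
    have hclosed : IsClosed K := by
      apply IsClosed.inter
      · exact isClosed_le continuous_const ((continuous_fst.sub continuous_snd).norm)
      · exact IsClosed.inter (isClosed_le continuous_fst.norm continuous_const)
          (isClosed_le continuous_snd.norm continuous_const)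
    exact ((isCompact_closedBall _ _).prod (isCompact_closedBall _ _)).of_isClosed_subset hclosed hsub
  rcases K.eq_empty_or_nonempty with hKe | hKne
  · refine ⟨1, one_pos, fun ξ η h1 h2 h3 => ?_⟩
    exfalso
    have : (ξ, η) ∈ K := ⟨h1, h2, h3⟩
    rw [hKe] at this
    exact this
  · obtain ⟨p, hpK, hpmin'⟩ := hKc.exists_isMinOn hKne hFcont.continuousOn
    have hpmin : ∀ q ∈ K, F p ≤ F q := fun q hq => hpmin' hq
    have hp : 0 < F p := by
      apply hFpos
      intro hcon
      have := hpK.1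
      rw [hcon, sub_self, norm_zero] at this
      linarith
    refine ⟨F p / 2, by linarith, fun ξ η h1 h2 h3 => ?_⟩
    have : F p ≤ F (ξ, η) := hpmin (ξ, η) ⟨h1, h2, h3⟩
    calc F p / 2 < F p := by linarith
      _ ≤ _ := this
end

section
/- Let $a : (0,\infty)\to(0,\infty)$ be $C^1$ with $-1 < i_a \le s_a < \infty$, and for $\varepsilon \in (0,1)$ let $a_\varepsilon(t) = \frac{a(\sqrt{\varepsilon + t^2}) + \varepsilon}{1 + \varepsilon a(\sqrt{\varepsilon + t^2})}$. Then $\min\{i_a, 0\} \le \inf_{t>0} \frac{t\,a_\varepsilon'(t)}{a_\varepsilon(t)}$ and $\sup_{t>0} \frac{t\,a_\varepsilon'(t)}{a_\varepsilon(t)} \le \max\{s_a, 0\}$. -/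
theorem stmt_11 (a : ℝ → ℝ) (hapos : ∀ t > 0, 0 < a t)
    (haC1 : ContDiffOn ℝ 1 a (Set.Ioi 0))
    (ia sa : ℝ) (hia : -1 < ia) (hisa : ia ≤ sa)
    (hinf : ∀ t > 0, ia ≤ t * deriv a t / a t)
    (hsup : ∀ t > 0, t * deriv a t / a t ≤ sa)
    (ε : ℝ) (hε : ε ∈ Set.Ioo (0:ℝ) 1)
    (aε : ℝ → ℝ)
    (haε : ∀ t, aε t = (a (Real.sqrt (ε + t^2)) + ε) / (1 + ε * a (Real.sqrt (ε + t^2)))) :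
    ∀ t > (0:ℝ),
      min ia 0 ≤ t * deriv aε t / aε t ∧ t * deriv aε t / aε t ≤ max sa 0 := by
  obtain ⟨hε0, hε1⟩ := hε
  intro t ht
  set s : ℝ := Real.sqrt (ε + t^2) with hsdef
  have hst : (0:ℝ) < ε + t^2 := by positivity
  have hs : 0 < s := Real.sqrt_pos.mpr hst
  have hs2 : s^2 = ε + t^2 := Real.sq_sqrt hst.le
  have hu : 0 < a s := hapos s hs
  set u : ℝ := a s with hudef
  have hda : DifferentiableAt ℝ a s :=
    ((haC1.differentiableOn one_ne_zero).differentiableAt (isOpen_Ioi.mem_nhds hs))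
  -- derivative of t ↦ sqrt (ε + t^2)
  have h1 : HasDerivAt (fun y : ℝ => ε + y^2) (2*t) t := by
    simpa using (hasDerivAt_pow 2 t).const_add ε
  have h2 : HasDerivAt Real.sqrt (1/(2*s)) (ε + t^2) :=
    Real.hasDerivAt_sqrt hst.ne'
  have hg : HasDerivAt (fun y : ℝ => Real.sqrt (ε + y^2)) (t / s) t := by
    have := h2.comp t h1
    rw [show t / s = 1 / (2 * s) * (2 * t) by
      rw [one_div, ← div_eq_inv_mul, mul_div_mul_left _ _ two_ne_zero]]
    exact this
  have hh : HasDerivAt (fun y : ℝ => a (Real.sqrt (ε + y^2))) (deriv a s * (t/s)) t := by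
    have := hda.hasDerivAt.comp t hg
    exact this
  set A : ℝ := deriv a s with hAdef
  set h' : ℝ := A * (t/s) with hh'def
  set D : ℝ := 1 + ε * u with hDdef
  have hD : 0 < D := by positivity
  have hN : HasDerivAt (fun y : ℝ => a (Real.sqrt (ε + y^2)) + ε) h' t := hh.add_const ε
  have hDen : HasDerivAt (fun y : ℝ => 1 + ε * a (Real.sqrt (ε + y^2))) (ε * h') t :=
    (hh.const_mul ε).const_add 1
  have haεf : aε = fun y : ℝ => (a (Real.sqrt (ε + y^2)) + ε) / (1 + ε * a (Real.sqrt (ε + y^2))) :=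
    funext haε
  have hder : HasDerivAt aε ((h' * D - (u + ε) * (ε * h')) / D ^ 2) t := by
    rw [haεf]
    exact hN.div hDen hD.ne'
  have hderiv : deriv aε t = (h' * D - (u + ε) * (ε * h')) / D ^ 2 := hder.deriv
  have haεt : aε t = (u + ε) / D := haε t
  set q : ℝ := s * A / u with hqdef
  have hq1 : ia ≤ q := hinf s hs
  have hq2 : q ≤ sa := hsup s hs
  have hA : A = q * u / s := by
    rw [hqdef]; field_simp
  set c : ℝ := t^2 * u * (1 - ε^2) / (s^2 * D * (u + ε)) with hcdef
  have huε : 0 < u + ε := by positivity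
  have hE : t * deriv aε t / aε t = q * c := by
    rw [hderiv, haεt, hcdef, hh'def, hA]
    field_simp
    ring
  have hc0 : 0 ≤ c := by
    have h1ε : 0 < 1 - ε^2 := by nlinarith
    positivity
  have hc1 : c ≤ 1 := by
    rw [hcdef, div_le_one (by positivity)]
    rw [hs2, hDdef]
    nlinarith [mul_pos hε0 hu, sq_nonneg t, mul_pos hε0 (mul_pos hu hu),
      mul_nonneg (sq_nonneg t) hε0.le]
  rw [hE]
  constructor
  · rcases le_or_gt 0 q with hq | hq
    · have : 0 ≤ q * c := mul_nonneg hq hc0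
      exact le_trans (min_le_right ia 0) this
    · have : q ≤ q * c := by nlinarith [mul_le_mul_of_nonpos_left hc1 hq.le]
      exact le_trans (min_le_left ia 0) (le_trans hq1 this)
  · rcases le_or_gt 0 q with hq | hq
    · have : q * c ≤ q := mul_le_of_le_one_right hq hc1
      exact le_trans this (le_trans hq2 (le_max_left sa 0))
    · have : q * c ≤ 0 := mul_nonpos_of_nonpos_of_nonneg hq.le hc0
      exact le_trans this (le_max_right sa 0)
end

section
/- Let $a$ be $C^1$ on $(0,\infty)$ with $-1 < i_a \le s_a < \infty$, and let $b_\varepsilon(t) = t\, a_\varepsilon(t)$ where $a_\varepsilon$ is as above. Then $b_\varepsilon \to b$ uniformly on $[0, M]$ for every $M > 0$ as $\varepsilon \to 0^+$, where $b(t) = t\,a(t)$, $b(0)=0$. -/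
open Real Set Filter Topology

lemma aux_rpow_bound (a : ℝ → ℝ) (hapos : ∀ t > 0, 0 < a t)
    (haC1 : ContDiffOn ℝ 1 a (Set.Ioi 0)) (ia : ℝ)
    (hinf : ∀ t > 0, ia ≤ t * deriv a t / a t) :
    ∀ t ∈ Set.Ioc (0:ℝ) 1, a t ≤ a 1 * t ^ ia := by
  set h : ℝ → ℝ := fun t => Real.log (a t) - ia * Real.log t with hh
  have hdiffa : ∀ t ∈ Set.Ioi (0:ℝ), DifferentiableAt ℝ a t := fun t ht =>
    (haC1.differentiableOn one_ne_zero).differentiableAt (isOpen_Ioi.mem_nhds ht)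
  have hder : ∀ t ∈ Set.Ioi (0:ℝ),
      HasDerivAt h (deriv a t / a t - ia * t⁻¹) t := by
    intro t ht
    have ht0 : (0:ℝ) < t := ht
    have h1 : HasDerivAt (fun y => Real.log (a y)) (deriv a t / a t) t :=
      ((hdiffa t ht).hasDerivAt).log (ne_of_gt (hapos t ht0))
    have h2 : HasDerivAt (fun y => ia * Real.log y) (ia * t⁻¹) t :=
      (Real.hasDerivAt_log (ne_of_gt ht0)).const_mul ia
    exact h1.sub h2
  have hmono : MonotoneOn h (Set.Ioi 0) := by
    apply monotoneOn_of_deriv_nonneg (convex_Ioi 0)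
    · exact fun t ht => ((hder t ht).differentiableAt).continuousAt.continuousWithinAt
    · rw [interior_Ioi]
      exact fun t ht => ((hder t ht).differentiableAt).differentiableWithinAt
    · rw [interior_Ioi]
      intro t ht
      rw [(hder t ht).deriv]
      have ht0 : (0:ℝ) < t := ht
      have ha0 : (0:ℝ) < a t := hapos t ht0
      have key := hinf t ht0
      have h4 : ia * a t ≤ t * deriv a t := (le_div_iff₀ ha0).mp key
      have e1 : ia * t⁻¹ = (ia * a t) / (a t * t) := by field_simp
      have e2 : deriv a t / a t = (t * deriv a t) / (a t * t) := by
        field_simp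
      rw [sub_nonneg, e1, e2]
      exact div_le_div_of_nonneg_right h4 (by positivity)
  intro t ⟨ht0, ht1⟩
  have hle : h t ≤ h 1 := hmono (by exact ht0) (by norm_num) ht1
  have hht : h t = Real.log (a t) - ia * Real.log t := rfl
  have hh1 : h 1 = Real.log (a 1) := by simp [hh]
  have hlog : Real.log (a t) ≤ Real.log (a 1) + ia * Real.log t := by
    rw [hht, hh1] at hle; linarith
  have ha1 : 0 < a 1 := hapos 1 one_pos
  have hat : 0 < a t := hapos t ht0
  calc a t = Real.exp (Real.log (a t)) := (Real.exp_log hat).symm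
    _ ≤ Real.exp (Real.log (a 1) + ia * Real.log t) := Real.exp_le_exp.mpr hlog
    _ = a 1 * t ^ ia := by
        rw [Real.exp_add, Real.exp_log ha1, Real.rpow_def_of_pos ht0, mul_comm ia]

theorem stmt_12 (a : ℝ → ℝ) (hapos : ∀ t > 0, 0 < a t)
    (haC1 : ContDiffOn ℝ 1 a (Set.Ioi 0))
    (hmono : MonotoneOn a (Set.Ioi 0) ∨ AntitoneOn a (Set.Ioi 0))
    (ia sa : ℝ) (hia : -1 < ia) (hisa : ia ≤ sa)
    (hinf : ∀ t > 0, ia ≤ t * deriv a t / a t)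
    (hsup : ∀ t > 0, t * deriv a t / a t ≤ sa) :
    ∀ M > (0:ℝ),
      TendstoUniformlyOn
        (fun (ε : ℝ) (t : ℝ) =>
          t * ((a (Real.sqrt (ε + t^2)) + ε) / (1 + ε * a (Real.sqrt (ε + t^2)))))
        (fun t => t * a t)
        (nhdsWithin 0 (Set.Ioo (0:ℝ) 1)) (Set.Icc 0 M) := by
  intro M hM
  have key := aux_rpow_bound a hapos haC1 ia hinf
  have hacont : ContinuousOn a (Set.Ioi 0) := haC1.continuousOn
  have ha1 : 0 < a 1 := hapos 1 one_pos
  have hia1 : 0 < 1 + ia := by linarith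
  have hM1 : (0:ℝ) < M + 1 := by linarith
  rw [Metric.tendstoUniformlyOn_iff]
  intro η hη
  obtain ⟨r₀, hr₀pos, hr₀⟩ :
      ∃ r₀ > 0, ∀ x : ℝ, 0 ≤ x → x < r₀ → a 1 * x ^ (1+ia) < η/4 := by
    have hc : ContinuousAt (fun x : ℝ => a 1 * x ^ (1+ia)) 0 :=
      ((Real.continuousAt_rpow_const 0 (1+ia) (Or.inr hia1.le)).const_mul _)
    have h0 : a 1 * (0:ℝ) ^ (1+ia) = 0 := by
      rw [Real.zero_rpow (ne_of_gt hia1)]; ring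
    rw [Metric.continuousAt_iff] at hc
    obtain ⟨r₀, hr₀pos, hr₀⟩ := hc (η/4) (by linarith)
    refine ⟨r₀, hr₀pos, fun x hx hxr => ?_⟩
    have hd := hr₀ (show dist x 0 < r₀ by rwa [Real.dist_eq, sub_zero, abs_of_nonneg hx])
    rw [Real.dist_eq, h0, sub_zero] at hd
    calc a 1 * x ^ (1+ia) ≤ |a 1 * x ^ (1+ia)| := le_abs_self _
      _ < η/4 := hd
  set δ : ℝ := min (1/2) (r₀/2) with hδdef
  clear_value δ
  have hδpos : 0 < δ := by rw [hδdef]; exact lt_min (by norm_num) (by linarith)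
  have hδhalf : δ ≤ 1/2 := by rw [hδdef]; exact min_le_left _ _
  have hδr : δ ≤ r₀/2 := by rw [hδdef]; exact min_le_right _ _
  set R : ℝ := Real.sqrt (1 + M^2) with hRdef
  clear_value R
  have hMR : M ≤ R := by
    rw [hRdef]
    calc M = Real.sqrt (M^2) := (Real.sqrt_sq hM.le).symm
      _ ≤ Real.sqrt (1 + M^2) := Real.sqrt_le_sqrt (by linarith)
  have hJsub : Set.Icc δ R ⊆ Set.Ioi 0 := fun x hx => lt_of_lt_of_le hδpos hx.1
  obtain ⟨K, hK⟩ := isCompact_Icc.exists_bound_of_continuousOn (hacont.mono hJsub)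
  have hKpos : (0:ℝ) < 1 + K^2 := by positivity
  obtain ⟨δ₂, hδ₂pos, hδ₂⟩ :=
    Metric.uniformContinuousOn_iff.mp
      (isCompact_Icc.uniformContinuousOn_of_continuous (hacont.mono hJsub))
      (η/(2*(M+1))) (by positivity)
  set ε₀ : ℝ := min (min (1/4) (δ₂^2))
      (min (min (r₀^2/4) (η/4)) (η/(2*(M+1)*(1+K^2)))) with hε₀def
  clear_value ε₀
  have hε₀pos : 0 < ε₀ := by
    rw [hε₀def]
    apply lt_min (lt_min (by norm_num) (by positivity))
    exact lt_min (lt_min (by positivity) (by linarith)) (by positivity)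
  have hev : ∀ᶠ ε in 𝓝[Set.Ioo (0:ℝ) 1] 0, |ε - 0| < ε₀ :=
    (eventually_abs_sub_lt (0:ℝ) hε₀pos).filter_mono nhdsWithin_le_nhds
  filter_upwards [self_mem_nhdsWithin, hev] with ε hεI hεlt
  obtain ⟨hε0, hε1'⟩ := hεI
  rw [sub_zero, abs_of_pos hε0, hε₀def] at hεlt
  have hε14 : ε < 1/4 := lt_of_lt_of_le hεlt (le_trans (min_le_left _ _) (min_le_left _ _))
  have hεδ₂ : ε < δ₂^2 := lt_of_lt_of_le hεlt (le_trans (min_le_left _ _) (min_le_right _ _))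
  have hεr₀ : ε < r₀^2/4 := lt_of_lt_of_le hεlt
    (le_trans (min_le_right _ _) (le_trans (min_le_left _ _) (min_le_left _ _)))
  have hεη4 : ε < η/4 := lt_of_lt_of_le hεlt
    (le_trans (min_le_right _ _) (le_trans (min_le_left _ _) (min_le_right _ _)))
  have hεK : ε < η/(2*(M+1)*(1+K^2)) := lt_of_lt_of_le hεlt
    (le_trans (min_le_right _ _) (min_le_right _ _))
  clear hεlt
  intro t ht
  obtain ⟨ht0, htM⟩ := ht
  rcases eq_or_lt_of_le ht0 with h0 | ht0'
  · rw [← h0]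
    simpa using hη
  set s : ℝ := Real.sqrt (ε + t^2) with hsdef
  clear_value s
  have hεt2 : (0:ℝ) < ε + t^2 := by positivity
  have hspos : 0 < s := by rw [hsdef]; exact Real.sqrt_pos.mpr hεt2
  have hts : t ≤ s := by
    rw [hsdef]
    calc t = Real.sqrt (t^2) := (Real.sqrt_sq ht0).symm
      _ ≤ Real.sqrt (ε + t^2) := Real.sqrt_le_sqrt (by linarith only [hε0])
  have hsqε : Real.sqrt ε ^ 2 = ε := Real.sq_sqrt hε0.le
  have hsqεpos : 0 < Real.sqrt ε := Real.sqrt_pos.mpr hε0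
  have hst : s ≤ t + Real.sqrt ε := by
    rw [hsdef]
    have hexp : (t + Real.sqrt ε)^2 = t^2 + 2*t*Real.sqrt ε + ε := by
      rw [add_sq, hsqε]
    have h2t : 0 ≤ 2*t*Real.sqrt ε := by positivity
    calc Real.sqrt (ε + t^2) ≤ Real.sqrt ((t + Real.sqrt ε)^2) :=
          Real.sqrt_le_sqrt (by linarith only [hexp, h2t])
      _ = t + Real.sqrt ε := Real.sqrt_sq (by positivity)
  have haspos : 0 < a s := hapos s hspos
  have hatpos : 0 < a t := hapos t ht0'
  have hden : (1:ℝ) ≤ 1 + ε * a s := by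
    have : 0 ≤ ε * a s := by positivity
    linarith only [this]
  set A : ℝ := (a s + ε) / (1 + ε * a s) with hAdef
  clear_value A
  have hApos : 0 < A := by
    rw [hAdef]
    exact div_pos (by linarith only [haspos, hε0]) (by linarith only [hden])
  have hAle : A ≤ a s + ε := by
    rw [hAdef]
    exact div_le_self (by linarith only [haspos, hε0]) hden
  rw [Real.dist_eq]
  rcases le_or_gt t δ with htδ | htδ
  · -- small t
    have hsε12 : Real.sqrt ε ≤ 1/2 :=
      calc Real.sqrt ε ≤ Real.sqrt ((1/2)^2) :=
            Real.sqrt_le_sqrt (by norm_num; linarith only [hε14])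
        _ = 1/2 := Real.sqrt_sq (by norm_num)
    have hsεr : Real.sqrt ε < r₀/2 := by
      have h := Real.sqrt_lt_sqrt hε0.le
        (show ε < (r₀/2)^2 from by
          calc ε < r₀^2/4 := hεr₀
            _ = (r₀/2)^2 := by ring)
      rwa [Real.sqrt_sq (by linarith only [hr₀pos])] at h
    have hs1 : s ≤ 1 := by linarith only [hst, htδ, hδhalf, hsε12]
    have hsr : s < r₀ := by linarith only [hst, htδ, hδr, hsεr]
    have htr : t < r₀ := by linarith only [htδ, hδr, hr₀pos]
    have hat1 : a t ≤ a 1 * t ^ ia := key t ⟨ht0', by linarith only [htδ, hδhalf]⟩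
    have has1 : a s ≤ a 1 * s ^ ia := key s ⟨hspos, hs1⟩
    have hrpt : t ^ (1+ia) = t * t ^ ia := by
      rw [Real.rpow_add ht0', Real.rpow_one]
    have hrps : s ^ (1+ia) = s * s ^ ia := by
      rw [Real.rpow_add hspos, Real.rpow_one]
    have hbt : t * a t ≤ a 1 * t ^ (1+ia) := by
      rw [hrpt]
      calc t * a t ≤ t * (a 1 * t ^ ia) := mul_le_mul_of_nonneg_left hat1 ht0'.le
        _ = a 1 * (t * t ^ ia) := by ring
    have hbs : s * a s ≤ a 1 * s ^ (1+ia) := by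
      rw [hrps]
      calc s * a s ≤ s * (a 1 * s ^ ia) := mul_le_mul_of_nonneg_left has1 hspos.le
        _ = a 1 * (s * s ^ ia) := by ring
    have hbt' : t * a t < η/4 := lt_of_le_of_lt hbt (hr₀ t ht0'.le htr)
    have hbs' : a 1 * s ^ (1+ia) < η/4 := hr₀ s hspos.le hsr
    have h2 : t * a s ≤ s * a s := mul_le_mul_of_nonneg_right hts haspos.le
    have h3 : t * ε ≤ ε := by
      have := mul_le_mul_of_nonneg_right
        (show t ≤ 1 by linarith only [htδ, hδhalf]) hε0.le
      linarith only [this]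
    have htA : t * A < η/2 :=
      calc t * A ≤ t * (a s + ε) := mul_le_mul_of_nonneg_left hAle ht0'.le
        _ = t * a s + t * ε := by ring
        _ ≤ s * a s + ε := by linarith only [h2, h3]
        _ ≤ a 1 * s ^ (1+ia) + ε := by linarith only [hbs]
        _ < η/4 + η/4 := by linarith only [hbs', hεη4]
        _ = η/2 := by ring
    have hnn1 : 0 ≤ t * a t := by positivity
    have hnn2 : 0 ≤ t * A := by positivity
    rw [abs_lt]
    constructor
    · linarith only [hbt', htA, hnn1, hnn2, hη]
    · linarith only [hbt', htA, hnn1, hnn2, hη]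
  · -- t ≥ δ
    have htJ : t ∈ Set.Icc δ R := ⟨htδ.le, le_trans htM hMR⟩
    have hsJ : s ∈ Set.Icc δ R := by
      refine ⟨le_trans htδ.le hts, ?_⟩
      rw [hsdef, hRdef]
      have ht2 : t^2 ≤ M^2 := by nlinarith [sq_nonneg (M - t)]
      exact Real.sqrt_le_sqrt (by linarith only [ht2, hε14])
    have hdist : dist t s < δ₂ := by
      rw [Real.dist_eq, abs_of_nonpos (by linarith only [hts])]
      have hεδ' : Real.sqrt ε < δ₂ := by
        have h := Real.sqrt_lt_sqrt hε0.le hεδ₂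
        rwa [Real.sqrt_sq hδ₂pos.le] at h
      linarith only [hst, hεδ']
    have h5 : |a t - a s| < η/(2*(M+1)) := by
      have := hδ₂ t htJ s hsJ hdist
      rwa [Real.dist_eq] at this
    have hKs : |a s| ≤ K := hK s hsJ
    have hKs2 : (a s)^2 ≤ K^2 := by
      have h := abs_le.mp hKs
      exact sq_le_sq' h.1 h.2
    have h6 : |a s - A| ≤ ε * (1 + (a s)^2) := by
      have hform : A - a s = ε * (1 - (a s)^2) / (1 + ε * a s) := by
        rw [hAdef]; field_simp; ring
      have habs : |a s - A| = |ε * (1 - (a s)^2)| / (1 + ε * a s) := by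
        rw [abs_sub_comm, hform, abs_div,
          abs_of_pos (show (0:ℝ) < 1 + ε * a s by linarith only [hden])]
      rw [habs]
      have hsq : 0 ≤ (a s)^2 := sq_nonneg _
      calc |ε * (1 - (a s)^2)| / (1 + ε * a s) ≤ |ε * (1 - (a s)^2)| :=
            div_le_self (abs_nonneg _) hden
        _ = ε * |1 - (a s)^2| := by rw [abs_mul, abs_of_pos hε0]
        _ ≤ ε * (1 + (a s)^2) := by
            apply mul_le_mul_of_nonneg_left _ hε0.le
            rw [abs_le]
            exact ⟨by linarith only [hsq], by linarith only [hsq]⟩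
    have h8 : ε * (1 + K^2) < η/(2*(M+1)) := by
      have hmul := mul_lt_mul_of_pos_right hεK hKpos
      have heq : η/(2*(M+1)*(1+K^2))*(1+K^2) = η/(2*(M+1)) := by
        field_simp
      rwa [heq] at hmul
    have h7 : ε * (1 + (a s)^2) < η/(2*(M+1)) := by
      have hle : ε * (1 + (a s)^2) ≤ ε * (1 + K^2) :=
        mul_le_mul_of_nonneg_left (by linarith only [hKs2]) hε0.le
      linarith only [hle, h8]
    have hfinal : |a t - A| < η/(M+1) :=
      calc |a t - A| ≤ |a t - a s| + |a s - A| := abs_sub_le _ _ _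
        _ < η/(2*(M+1)) + η/(2*(M+1)) := by linarith only [h5, h6, h7]
        _ = η/(M+1) := by
            rw [← add_div, div_eq_div_iff (by linarith only [hM1]) (by linarith only [hM1])]
            ring
    have hfac : |t * a t - t * A| = t * |a t - A| := by
      rw [← mul_sub, abs_mul, abs_of_pos ht0']
    rw [hfac]
    calc t * |a t - A| ≤ M * |a t - A| :=
          mul_le_mul_of_nonneg_right htM (abs_nonneg _)
      _ < M * (η/(M+1)) := mul_lt_mul_of_pos_left hfinal hM
      _ < η := by
          rw [mul_div_assoc', div_lt_iff₀ hM1]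
          have := mul_pos hM hη
          linarith only [hη, this]
end

section
/- Let $a$ be $C^1$ on $(0,\infty)$ with $-1 < i_a \le s_a < \infty$, $b(t)=a(t)t$, $B(t)=\int_0^t b$, and $\widetilde{B}$ the Young conjugate of $B$. Then there exists a constant $C$ depending only on $i_a, s_a$ such that $\widetilde{B}(b(t)) \le C\, B(t)$ for all $t \ge 0$. -/
theorem stmt_14 (a : ℝ → ℝ) (hapos : ∀ t > 0, 0 < a t)
    (haC1 : ContDiffOn ℝ 1 a (Set.Ioi 0))
    (ia sa : ℝ) (hia : -1 < ia) (hisa : ia ≤ sa)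
    (hinf : ∀ t > 0, ia ≤ t * deriv a t / a t)
    (hsup : ∀ t > 0, t * deriv a t / a t ≤ sa)
    (binv : ℝ → ℝ)
    (hbinv : ∀ t ≥ (0:ℝ), binv (t * a t) = t)
    (hbinv' : ∀ s ≥ (0:ℝ), 0 ≤ binv s ∧ binv s * a (binv s) = s) :
    ∃ C : ℝ, ∀ t ≥ 0,
      (∫ s in (0:ℝ)..(t * a t), binv s) ≤ C * ∫ τ in (0:ℝ)..t, τ * a τ := by
  have hsa1 : (0:ℝ) < sa + 1 := by linarith
  have hsa2 : (0:ℝ) < sa + 2 := by linarith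
  -- differentiability of a on Ioi 0
  have hdiff : ∀ x ∈ Set.Ioi (0:ℝ), DifferentiableAt ℝ a x := fun x hx =>
    (haC1.differentiableOn one_ne_zero).differentiableAt (isOpen_Ioi.mem_nhds hx)
  have hb_deriv : ∀ x ∈ Set.Ioi (0:ℝ),
      HasDerivAt (fun τ => τ * a τ) (a x + x * deriv a x) x := by
    intro x hx
    have h2 : HasDerivAt a (deriv a x) x := (hdiff x hx).hasDerivAt
    have := (hasDerivAt_id' x).fun_mul h2
    simpa [add_comm] using this
  have hbpos : ∀ x ∈ Set.Ioi (0:ℝ), 0 < a x + x * deriv a x := by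
    intro x hx
    have hax := hapos x hx
    have h := hinf x hx
    have h2 : ia * a x ≤ x * deriv a x := by
      have := (le_div_iff₀ hax).mp h
      linarith
    nlinarith
  have hbmono : StrictMonoOn (fun τ => τ * a τ) (Set.Ioi 0) := by
    apply strictMonoOn_of_deriv_pos (convex_Ioi 0)
    · intro x hx
      exact ((hb_deriv x hx).differentiableAt.continuousAt).continuousWithinAt
    · intro x hx
      rw [interior_Ioi] at hx
      rw [(hb_deriv x hx).deriv]
      exact hbpos x hx
  -- binv is monotone on Ici 0
  have hbinv_mono : MonotoneOn binv (Set.Ici 0) := by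
    intro s₁ hs₁ s₂ hs₂ hle
    by_contra hcon
    push_neg at hcon
    obtain ⟨h1nn, h1eq⟩ := hbinv' s₁ hs₁
    obtain ⟨h2nn, h2eq⟩ := hbinv' s₂ hs₂
    have hpos1 : 0 < binv s₁ := lt_of_le_of_lt h2nn hcon
    rcases eq_or_lt_of_le h2nn with h0 | h2pos
    · have hs2z : s₂ = 0 := by rw [← h2eq, ← h0]; ring
      have hs1z : s₁ = 0 := le_antisymm (by rw [← hs2z]; exact hle) hs₁
      have : binv s₁ * a (binv s₁) = 0 := by rw [h1eq, hs1z]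
      nlinarith [hapos (binv s₁) hpos1]
    · have := hbmono (Set.mem_Ioi.mpr h2pos) (Set.mem_Ioi.mpr hpos1) hcon
      simp only at this
      rw [h2eq, h1eq] at this
      linarith
  -- antitone of a τ * τ^(-sa)
  have hg_deriv : ∀ x ∈ Set.Ioi (0:ℝ),
      HasDerivAt (fun τ => a τ * τ ^ (-sa))
        (deriv a x * x ^ (-sa) + a x * (-sa * x ^ (-sa - 1))) x := by
    intro x hx
    have hx0 : x ≠ 0 := ne_of_gt hx
    have h2 : HasDerivAt (fun τ : ℝ => τ ^ (-sa)) (-sa * x ^ (-sa - 1)) x :=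
      Real.hasDerivAt_rpow_const (Or.inl hx0)
    exact ((hdiff x hx).hasDerivAt).mul h2
  have hg_anti : AntitoneOn (fun τ => a τ * τ ^ (-sa)) (Set.Ioi 0) := by
    apply antitoneOn_of_deriv_nonpos (convex_Ioi 0)
    · intro x hx
      exact ((hg_deriv x hx).differentiableAt.continuousAt).continuousWithinAt
    · intro x hx
      rw [interior_Ioi] at hx
      exact ((hg_deriv x hx).differentiableAt).differentiableWithinAt
    · intro x hx
      rw [interior_Ioi] at hx
      rw [(hg_deriv x hx).deriv]
      have hax := hapos x hx
      have h := hsup x hx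
      have h2 : x * deriv a x ≤ sa * a x := by
        have := (div_le_iff₀ hax).mp h
        linarith
      have hx0 : (0:ℝ) < x := hx
      have hxp : (0:ℝ) < x ^ (-sa - 1) := Real.rpow_pos_of_pos hx0 _
      have hsplit : x ^ (-sa) = x ^ (-sa - 1) * x := by
        rw [← Real.rpow_add_one (ne_of_gt hx0)]
        ring_nf
      rw [hsplit]
      nlinarith
  refine ⟨sa + 2, fun t ht => ?_⟩
  rcases eq_or_lt_of_le ht with rfl | htpos
  · simp
  -- t > 0 case
  have hat := hapos t htpos
  have hbt : 0 < t * a t := mul_pos htpos hat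
  -- Step 1 : binv ≤ t on [0, t * a t]
  have hbinv_le : ∀ s ∈ Set.Icc (0:ℝ) (t * a t), binv s ≤ t := by
    intro s hs
    obtain ⟨hnn, heq⟩ := hbinv' s hs.1
    by_contra hcon
    push_neg at hcon
    have := hbmono (Set.mem_Ioi.mpr htpos) (Set.mem_Ioi.mpr (lt_trans htpos hcon)) hcon
    simp only at this
    rw [heq] at this
    linarith [hs.2]
  -- LHS ≤ t * (t * a t)
  have hLHS_int : IntervalIntegrable binv MeasureTheory.volume 0 (t * a t) := by
    apply MonotoneOn.intervalIntegrable
    rw [Set.uIcc_of_le (le_of_lt hbt)]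
    exact hbinv_mono.mono (Set.Icc_subset_Ici_self)
  have hLHS : (∫ s in (0:ℝ)..(t * a t), binv s) ≤ t * (t * a t) := by
    have := intervalIntegral.integral_mono_on (le_of_lt hbt) hLHS_int
      (intervalIntegrable_const) hbinv_le
    simpa [mul_comm] using this
  -- pointwise bound : (a t * t^(-sa)) * τ^(sa+1) ≤ τ * a τ on [0, t]
  have hptw : ∀ τ ∈ Set.Icc (0:ℝ) t, (a t * t ^ (-sa)) * τ ^ (sa + 1) ≤ τ * a τ := by
    intro τ hτ
    rcases eq_or_lt_of_le hτ.1 with rfl | hτpos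
    · rw [Real.zero_rpow (ne_of_gt hsa1)]
      simp
    · have h1 := hg_anti (Set.mem_Ioi.mpr hτpos) (Set.mem_Ioi.mpr htpos) hτ.2
      simp only at h1
      have hsplit : τ ^ (sa + 1) = τ ^ sa * τ := by
        rw [Real.rpow_add hτpos, Real.rpow_one]
      have hττ : τ ^ (-sa) * τ ^ sa = 1 := by
        rw [← Real.rpow_add hτpos]
        simp
      have hτsp : (0:ℝ) ≤ τ ^ sa * τ := by positivity
      calc (a t * t ^ (-sa)) * τ ^ (sa + 1)
          = (a t * t ^ (-sa)) * (τ ^ sa * τ) := by rw [hsplit]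
        _ ≤ (a τ * τ ^ (-sa)) * (τ ^ sa * τ) := mul_le_mul_of_nonneg_right h1 hτsp
        _ = a τ * (τ ^ (-sa) * τ ^ sa) * τ := by ring
        _ = τ * a τ := by rw [hττ]; ring
  -- integrability of RHS integrand
  have hRHS_int : IntervalIntegrable (fun τ => τ * a τ) MeasureTheory.volume 0 t := by
    apply MonotoneOn.intervalIntegrable
    rw [Set.uIcc_of_le (le_of_lt htpos)]
    intro x hx y hy hxy
    rcases eq_or_lt_of_le hx.1 with rfl | hxpos
    · simp only [zero_mul]
      rcases eq_or_lt_of_le hxy with rfl | hy0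
      · simp
      · exact le_of_lt (mul_pos hy0 (hapos y hy0))
    · rcases eq_or_lt_of_le hxy with rfl | hlt
      · exact le_rfl
      · exact le_of_lt (hbmono (Set.mem_Ioi.mpr hxpos) (Set.mem_Ioi.mpr (lt_trans hxpos hlt)) hlt)
  have hpow_int : IntervalIntegrable (fun τ : ℝ => (a t * t ^ (-sa)) * τ ^ (sa + 1))
      MeasureTheory.volume 0 t :=
    (intervalIntegral.intervalIntegrable_rpow' (by linarith)).const_mul _
  have hcomp : (∫ τ in (0:ℝ)..t, (a t * t ^ (-sa)) * τ ^ (sa + 1)) ≤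
      ∫ τ in (0:ℝ)..t, τ * a τ :=
    intervalIntegral.integral_mono_on (le_of_lt htpos) hpow_int hRHS_int hptw
  -- compute the left integral
  have hval : (∫ τ in (0:ℝ)..t, (a t * t ^ (-sa)) * τ ^ (sa + 1))
      = (a t * t ^ (-sa)) * (t ^ (sa + 2) / (sa + 2)) := by
    rw [intervalIntegral.integral_const_mul, integral_rpow (Or.inl (by linarith))]
    rw [Real.zero_rpow (by positivity : sa + 1 + 1 ≠ 0)]
    ring_nf
  have hpowsplit : t ^ (sa + 2) = t ^ sa * t ^ 2 := by
    rw [Real.rpow_add htpos]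
    norm_num [Real.rpow_two]
  have httsa : t ^ (-sa) * t ^ sa = 1 := by
    rw [← Real.rpow_add htpos]; simp
  have hfinal : t * (t * a t) ≤ (sa + 2) * ∫ τ in (0:ℝ)..t, τ * a τ := by
    have h1 : (a t * t ^ (-sa)) * (t ^ (sa + 2) / (sa + 2)) = t * (t * a t) / (sa + 2) := by
      rw [hpowsplit]
      linear_combination (a t * t ^ 2 / (sa + 2)) * httsa
    rw [hval, h1] at hcomp
    rw [div_le_iff₀ hsa2] at hcomp
    linarith [hcomp]
  linarith
end

section
/- Let $\Omega \subset \mathbb{R}^n$ be an open set, $a : (0,\infty)\to(0,\infty)$ be $C^1$ with $i_a = \inf_{t>0} t a'(t)/a(t) > -1$, and $\mathbf{v} \in C^3(\Omega, \mathbb{R}^N)$. Then at every point of $\{\nabla \mathbf{v} \ne 0\}$: $\sum_{\alpha=1}^N \Delta v^\alpha\, \mathrm{div}(a(|\nabla\mathbf{v}|)\nabla v^\alpha) \ge \sum_{\alpha=1}^N \mathrm{div}(\Delta v^\alpha\, a(|\nabla\mathbf{v}|)\nabla v^\alpha) - \sum_{\alpha=1}^N\sum_{i,j=1}^n (v^\alpha_{x_i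 x_j}\, a(|\nabla\mathbf{v}|)\, v^\alpha_{x_i})_{x_j} + (1+\min\{i_a,0\})\, a(|\nabla\mathbf{v}|) \sum_{\alpha=1}^N |\nabla^2 v^\alpha|^2$. -/
/-- Partial derivative of `f : (Fin n → ℝ) → ℝ` in the `i`-th coordinate direction. -/
noncomputable def pd {n : ℕ} (i : Fin n) (f : (Fin n → ℝ) → ℝ) : (Fin n → ℝ) → ℝ :=
  fun x => fderiv ℝ f x (Pi.single i 1)

/-- Euclidean norm of the full gradient matrix of `v : Fin N → (Fin n → ℝ) → ℝ`. -/
noncomputable def gradNorm {n N : ℕ} (v : Fin N → (Fin n → ℝ) → ℝ) :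
    (Fin n → ℝ) → ℝ :=
  fun x => Real.sqrt (∑ α, ∑ i, (pd i (v α) x)^2)

section helpers
variable {n : ℕ}

lemma pd_contDiffAt {m : ℕ} {f : (Fin n → ℝ) → ℝ} {x : Fin n → ℝ} (i : Fin n)
    (hf : ContDiffAt ℝ (m+1) f x) : ContDiffAt ℝ m (pd i f) x := by
  have h1 : ContDiffAt ℝ m (fderiv ℝ f) x := hf.fderiv_right (by exact_mod_cast le_refl (m+1))
  exact ((ContinuousLinearMap.apply ℝ ℝ (Pi.single i (1:ℝ))).contDiff.contDiffAt).comp x h1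

lemma pd_mul {f g : (Fin n → ℝ) → ℝ} {x : Fin n → ℝ} (i : Fin n)
    (hf : DifferentiableAt ℝ f x) (hg : DifferentiableAt ℝ g x) :
    pd i (fun y => f y * g y) x = pd i f x * g x + f x * pd i g x := by
  unfold pd
  rw [fderiv_fun_mul hf hg]
  simp [smul_eq_mul]
  ring

lemma pd_sum {ι : Type*} (s : Finset ι) {f : ι → (Fin n → ℝ) → ℝ} {x : Fin n → ℝ} (i : Fin n)
    (hf : ∀ j ∈ s, DifferentiableAt ℝ (f j) x) :
    pd i (fun y => ∑ j ∈ s, f j y) x = ∑ j ∈ s, pd i (f j) x := by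
  unfold pd
  rw [fderiv_fun_sum hf]
  simp

lemma pd_symm {f : (Fin n → ℝ) → ℝ} {x : Fin n → ℝ} (i j : Fin n)
    (hf : ContDiffAt ℝ 2 f x) : pd j (pd i f) x = pd i (pd j f) x := by
  have hd : DifferentiableAt ℝ (fderiv ℝ f) x :=
    (hf.fderiv_right (m := 1) (by norm_num)).differentiableAt one_ne_zero
  have key : ∀ (i j : Fin n), pd j (pd i f) x
      = fderiv ℝ (fderiv ℝ f) x (Pi.single j 1) (Pi.single i 1) := by
    intro i j
    show fderiv ℝ (fun y => (fderiv ℝ f y) (Pi.single i 1)) x (Pi.single j 1) = _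
    rw [fderiv_clm_apply hd (differentiableAt_const _)]
    simp
  rw [key, key, hf.isSymmSndFDerivAt (by simp)]

lemma sum_comm3 {M : Type*} [AddCommMonoid M] {ι κ μ : Type*} [Fintype ι] [Fintype κ] [Fintype μ]
    (F : ι → κ → μ → M) : (∑ a, ∑ b, ∑ c, F a b c) = ∑ c, ∑ a, ∑ b, F a b c := by
  have h1 : (∑ a, ∑ b, ∑ c, F a b c) = ∑ a, ∑ c, ∑ b, F a b c :=
    Finset.sum_congr rfl fun a _ => Finset.sum_comm
  rw [h1, Finset.sum_comm]

end helpers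


set_option maxHeartbeats 2000000 in
theorem stmt_17 (n N : ℕ) (Ω : Set (Fin n → ℝ)) (hΩ : IsOpen Ω)
    (a : ℝ → ℝ) (hapos : ∀ t > 0, 0 < a t)
    (haC1 : ContDiffOn ℝ 1 a (Set.Ioi 0))
    (ia : ℝ) (hia : -1 < ia)
    (hinf : ∀ t > 0, ia ≤ t * deriv a t / a t)
    (v : Fin N → (Fin n → ℝ) → ℝ)
    (hv : ∀ α, ContDiffOn ℝ 3 (v α) Ω)
    (x : Fin n → ℝ) (hx : x ∈ Ω)
    (hgrad : gradNorm v x ≠ 0) :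
    (∑ α, (∑ i, pd i (pd i (v α)) x) *
        (∑ i, pd i (fun y => a (gradNorm v y) * pd i (v α) y) x)) ≥
      (∑ α, ∑ i, pd i (fun y =>
          (∑ j, pd j (pd j (v α)) y) * (a (gradNorm v y) * pd i (v α) y)) x)
      - (∑ α, ∑ i, ∑ j, pd j (fun y =>
          pd j (pd i (v α)) y * a (gradNorm v y) * pd i (v α) y) x)
      + (1 + min ia 0) * a (gradNorm v x) *
          ∑ α, ∑ i, ∑ j, (pd j (pd i (v α)) x)^2 := by
  classical
  have hvC3 : ∀ α, ∀ y ∈ Ω, ContDiffAt ℝ 3 (v α) y :=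
    fun α y hy => (hv α).contDiffAt (hΩ.mem_nhds hy)
  have hC2 : ∀ α i, ∀ y ∈ Ω, ContDiffAt ℝ 2 (pd i (v α)) y := by
    intro α i y hy
    exact pd_contDiffAt (m := 2) i (by exact_mod_cast hvC3 α y hy)
  have hC1 : ∀ α i j, ∀ y ∈ Ω, ContDiffAt ℝ 1 (pd j (pd i (v α))) y := by
    intro α i j y hy
    exact pd_contDiffAt (m := 1) j (by exact_mod_cast hC2 α i y hy)
  have hd1 : ∀ α i, DifferentiableAt ℝ (pd i (v α)) x :=
    fun α i => (hC2 α i x hx).differentiableAt two_ne_zero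
  have hd2 : ∀ α i j, DifferentiableAt ℝ (pd j (pd i (v α))) x :=
    fun α i j => (hC1 α i j x hx).differentiableAt one_ne_zero
  -- positivity of the gradient norm
  have hQ0 : 0 ≤ ∑ α, ∑ i, (pd i (v α) x)^2 := by positivity
  have hr0 : 0 < gradNorm v x := lt_of_le_of_ne (Real.sqrt_nonneg _) (Ne.symm hgrad)
  have hQx : (∑ α, ∑ i, (pd i (v α) x)^2) = (gradNorm v x)^2 := (Real.sq_sqrt hQ0).symm
  have hQpos : 0 < ∑ α, ∑ i, (pd i (v α) x)^2 := by rw [hQx]; positivity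
  -- derivative of Q
  have hQidiff : ∀ (α : Fin N), DifferentiableAt ℝ (fun y => ∑ i, (pd i (v α) y)^2) x := by
    intro α
    apply DifferentiableAt.fun_sum
    intro i _
    exact (hd1 α i).pow 2
  have hQdiff : DifferentiableAt ℝ (fun y => ∑ α, ∑ i, (pd i (v α) y)^2) x := by
    apply DifferentiableAt.fun_sum
    intro α _
    exact hQidiff α
  have hsq : ∀ (α : Fin N) (i j : Fin n), pd j (fun y => (pd i (v α) y)^2) x
      = 2 * (pd i (v α) x * pd j (pd i (v α)) x) := by
    intro α i j
    have e : (fun y => (pd i (v α) y)^2) = (fun y => pd i (v α) y * pd i (v α) y) := by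
      funext y; ring
    rw [e, pd_mul j (hd1 α i) (hd1 α i)]
    ring
  have hQpd : ∀ j, pd j (fun y => ∑ α, ∑ i, (pd i (v α) y)^2) x
      = 2 * ∑ α, ∑ i, pd i (v α) x * pd j (pd i (v α)) x := by
    intro j
    rw [pd_sum Finset.univ j (fun α _ => hQidiff α)]
    rw [Finset.mul_sum]
    apply Finset.sum_congr rfl
    intro α _
    rw [pd_sum (f := fun i y => (pd i (v α) y)^2) Finset.univ j (fun i _ => (hd1 α i).pow 2)]
    rw [Finset.mul_sum]
    exact Finset.sum_congr rfl fun i _ => hsq α i j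
  -- derivative of gradNorm
  have hGhas : HasFDerivAt (gradNorm v)
      ((1/(2*gradNorm v x)) • fderiv ℝ (fun y => ∑ α, ∑ i, (pd i (v α) y)^2) x) x := by
    have h1 : HasDerivAt Real.sqrt (1/(2*gradNorm v x)) (∑ α, ∑ i, (pd i (v α) x)^2) :=
      Real.hasDerivAt_sqrt (ne_of_gt hQpos)
    exact h1.comp_hasFDerivAt x hQdiff.hasFDerivAt
  have hGdiff : DifferentiableAt ℝ (gradNorm v) x := hGhas.differentiableAt
  have hGpd : ∀ j, pd j (gradNorm v) x
      = (∑ α, ∑ i, pd i (v α) x * pd j (pd i (v α)) x) / gradNorm v x := by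
    intro j
    have e1 : pd j (gradNorm v) x
        = (1/(2*gradNorm v x)) * pd j (fun y => ∑ α, ∑ i, (pd i (v α) y)^2) x := by
      show fderiv ℝ (gradNorm v) x (Pi.single j 1) = _
      rw [hGhas.fderiv]
      rfl
    rw [e1, hQpd j]
    field_simp
  -- derivative of a ∘ gradNorm
  have haDiff : DifferentiableAt ℝ a (gradNorm v x) :=
    (haC1.contDiffAt (isOpen_Ioi.mem_nhds hr0)).differentiableAt one_ne_zero
  have hAhas : HasFDerivAt (fun y => a (gradNorm v y))
      ((deriv a (gradNorm v x)) • fderiv ℝ (gradNorm v) x) x :=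
    (haDiff.hasDerivAt).comp_hasFDerivAt x hGdiff.hasFDerivAt
  have hAdiff : DifferentiableAt ℝ (fun y => a (gradNorm v y)) x := hAhas.differentiableAt
  have hApd : ∀ j, pd j (fun y => a (gradNorm v y)) x
      = deriv a (gradNorm v x) *
          ((∑ α, ∑ i, pd i (v α) x * pd j (pd i (v α)) x) / gradNorm v x) := by
    intro j
    have e1 : pd j (fun y => a (gradNorm v y)) x
        = deriv a (gradNorm v x) * pd j (gradNorm v) x := by
      show fderiv ℝ (fun y => a (gradNorm v y)) x (Pi.single j 1) = _
      rw [hAhas.fderiv]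
      rfl
    rw [e1, hGpd j]
  -- the flux components E α i
  have hEdiff : ∀ α i, DifferentiableAt ℝ (fun y => a (gradNorm v y) * pd i (v α) y) x :=
    fun α i => hAdiff.mul (hd1 α i)
  have hEpd : ∀ α i j, pd j (fun y => a (gradNorm v y) * pd i (v α) y) x
      = pd j (fun y => a (gradNorm v y)) x * pd i (v α) x
        + a (gradNorm v x) * pd j (pd i (v α)) x :=
    fun α i j => pd_mul j hAdiff (hd1 α i)
  -- the Laplacians
  have hΔdiff : ∀ α, DifferentiableAt ℝ (fun y => ∑ j, pd j (pd j (v α)) y) x := by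
    intro α
    apply DifferentiableAt.fun_sum
    intro j _
    exact hd2 α j j
  have hΔpd : ∀ α i, pd i (fun y => ∑ j, pd j (pd j (v α)) y) x
      = ∑ j, pd i (pd j (pd j (v α))) x :=
    fun α i => pd_sum Finset.univ i (fun j _ => hd2 α j j)
  -- third derivative symmetry
  have hsym3 : ∀ α i, (∑ j, pd j (pd j (pd i (v α))) x)
      = pd i (fun y => ∑ j, pd j (pd j (v α)) y) x := by
    intro α i
    rw [hΔpd α i]
    apply Finset.sum_congr rfl
    intro j _
    have heq : pd j (pd i (v α)) =ᶠ[nhds x] pd i (pd j (v α)) := by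
      filter_upwards [hΩ.mem_nhds hx] with y hy
      exact pd_symm i j ((hvC3 α y hy).of_le (by norm_num))
    have e1 : pd j (pd j (pd i (v α))) x = pd j (pd i (pd j (v α))) x := by
      show fderiv ℝ (pd j (pd i (v α))) x (Pi.single j 1)
          = fderiv ℝ (pd i (pd j (v α))) x (Pi.single j 1)
      rw [heq.fderiv_eq]
    rw [e1]
    exact pd_symm i j (hC2 α j x hx)
  -- first big sum
  have hT1 : (∑ α, ∑ i, pd i (fun y =>
        (∑ j, pd j (pd j (v α)) y) * (a (gradNorm v y) * pd i (v α) y)) x)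
      = (∑ α, ∑ i, pd i (fun y => ∑ j, pd j (pd j (v α)) y) x
            * (a (gradNorm v x) * pd i (v α) x))
        + (∑ α, (∑ i, pd i (pd i (v α)) x) *
            (∑ i, pd i (fun y => a (gradNorm v y) * pd i (v α) y) x)) := by
    rw [← Finset.sum_add_distrib]
    apply Finset.sum_congr rfl
    intro α _
    rw [Finset.mul_sum, ← Finset.sum_add_distrib]
    apply Finset.sum_congr rfl
    intro i _
    exact pd_mul i (hΔdiff α) (hEdiff α i)
  -- second big sum
  have hT2 : (∑ α, ∑ i, ∑ j, pd j (fun y =>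
        pd j (pd i (v α)) y * a (gradNorm v y) * pd i (v α) y) x)
      = (∑ α, ∑ i, pd i (fun y => ∑ j, pd j (pd j (v α)) y) x
            * (a (gradNorm v x) * pd i (v α) x))
        + (∑ α, ∑ i, ∑ j, pd j (pd i (v α)) x *
            pd j (fun y => a (gradNorm v y) * pd i (v α) y) x) := by
    have inner : ∀ α i j, pd j (fun y =>
          pd j (pd i (v α)) y * a (gradNorm v y) * pd i (v α) y) x
        = pd j (pd j (pd i (v α))) x * (a (gradNorm v x) * pd i (v α) x)
          + pd j (pd i (v α)) x * pd j (fun y => a (gradNorm v y) * pd i (v α) y) x := by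
      intro α i j
      have e : (fun y => pd j (pd i (v α)) y * a (gradNorm v y) * pd i (v α) y)
          = (fun y => pd j (pd i (v α)) y * (a (gradNorm v y) * pd i (v α) y)) := by
        funext y; ring
      rw [e]
      exact pd_mul j (hd2 α i j) (hEdiff α i)
    rw [← Finset.sum_add_distrib]
    apply Finset.sum_congr rfl
    intro α _
    rw [← Finset.sum_add_distrib]
    apply Finset.sum_congr rfl
    intro i _
    rw [← hsym3 α i, Finset.sum_mul, ← Finset.sum_add_distrib]
    exact Finset.sum_congr rfl fun j _ => inner α i j
  -- key second order sum
  have hKey : (∑ α, ∑ i, ∑ j, pd j (pd i (v α)) x *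
        pd j (fun y => a (gradNorm v y) * pd i (v α) y) x)
      = (deriv a (gradNorm v x) / gradNorm v x) *
          (∑ j, (∑ α, ∑ i, pd i (v α) x * pd j (pd i (v α)) x)^2)
        + a (gradNorm v x) * (∑ α, ∑ i, ∑ j, (pd j (pd i (v α)) x)^2) := by
    have e1 : ∀ α i j, pd j (pd i (v α)) x *
          pd j (fun y => a (gradNorm v y) * pd i (v α) y) x
        = deriv a (gradNorm v x) / gradNorm v x *
            (pd i (v α) x * pd j (pd i (v α)) x *
              (∑ β, ∑ k, pd k (v β) x * pd j (pd k (v β)) x))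
          + a (gradNorm v x) * (pd j (pd i (v α)) x)^2 := by
      intro α i j
      rw [hEpd α i j, hApd j]
      have hrne : gradNorm v x ≠ 0 := hgrad
      field_simp
    calc (∑ α, ∑ i, ∑ j, pd j (pd i (v α)) x *
          pd j (fun y => a (gradNorm v y) * pd i (v α) y) x)
        = (∑ α, ∑ i, ∑ j, deriv a (gradNorm v x) / gradNorm v x *
            (pd i (v α) x * pd j (pd i (v α)) x *
              (∑ β, ∑ k, pd k (v β) x * pd j (pd k (v β)) x)))
          + (∑ α, ∑ i, ∑ j, a (gradNorm v x) * (pd j (pd i (v α)) x)^2) := by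
          rw [← Finset.sum_add_distrib]
          refine Finset.sum_congr rfl fun α _ => ?_
          rw [← Finset.sum_add_distrib]
          refine Finset.sum_congr rfl fun i _ => ?_
          rw [← Finset.sum_add_distrib]
          exact Finset.sum_congr rfl fun j _ => e1 α i j
      _ = (deriv a (gradNorm v x) / gradNorm v x) *
            (∑ j, (∑ α, ∑ i, pd i (v α) x * pd j (pd i (v α)) x)^2)
          + a (gradNorm v x) * (∑ α, ∑ i, ∑ j, (pd j (pd i (v α)) x)^2) := by
          congr 1
          · rw [sum_comm3]
            conv_rhs => rw [Finset.mul_sum]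
            refine Finset.sum_congr rfl fun j _ => ?_
            have expand : ∀ t : ℝ, deriv a (gradNorm v x) / gradNorm v x *
                  ((∑ α, ∑ i, pd i (v α) x * pd j (pd i (v α)) x) * t)
                = ∑ α, ∑ i, deriv a (gradNorm v x) / gradNorm v x *
                    (pd i (v α) x * pd j (pd i (v α)) x * t) := by
              intro t
              rw [Finset.sum_mul, Finset.mul_sum]
              refine Finset.sum_congr rfl fun α _ => ?_
              rw [Finset.sum_mul, Finset.mul_sum]
              all_goals exact Finset.sum_congr rfl fun i _ => by ring
            rw [sq, expand]
          · simp only [Finset.mul_sum]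
  -- Cauchy-Schwarz bound
  have hHnn : 0 ≤ ∑ α, ∑ i, ∑ j, (pd j (pd i (v α)) x)^2 := by positivity
  have hCS : (∑ j, (∑ α, ∑ i, pd i (v α) x * pd j (pd i (v α)) x)^2)
      ≤ (gradNorm v x)^2 * ∑ α, ∑ i, ∑ j, (pd j (pd i (v α)) x)^2 := by
    have hj : ∀ j, (∑ α, ∑ i, pd i (v α) x * pd j (pd i (v α)) x)^2
        ≤ (gradNorm v x)^2 * (∑ α, ∑ i, (pd j (pd i (v α)) x)^2) := by
      intro j
      have cs := Finset.sum_mul_sq_le_sq_mul_sq Finset.univ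
        (fun p : Fin N × Fin n => pd p.2 (v p.1) x)
        (fun p : Fin N × Fin n => pd j (pd p.2 (v p.1)) x)
      simp only [Fintype.sum_prod_type] at cs
      rw [hQx] at cs
      exact cs
    calc (∑ j, (∑ α, ∑ i, pd i (v α) x * pd j (pd i (v α)) x)^2)
        ≤ ∑ j, (gradNorm v x)^2 * (∑ α, ∑ i, (pd j (pd i (v α)) x)^2) :=
          Finset.sum_le_sum fun j _ => hj j
      _ = (gradNorm v x)^2 * ∑ α, ∑ i, ∑ j, (pd j (pd i (v α)) x)^2 := by
          rw [← Finset.mul_sum]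
          congr 1
          exact (sum_comm3 (fun α i j => (pd j (pd i (v α)) x)^2)).symm
  have har : 0 < a (gradNorm v x) := hapos _ hr0
  have hIneq : min ia 0 *
        (a (gradNorm v x) * ∑ α, ∑ i, ∑ j, (pd j (pd i (v α)) x)^2)
      ≤ deriv a (gradNorm v x) / gradNorm v x *
          ∑ j, (∑ α, ∑ i, pd i (v α) x * pd j (pd i (v α)) x)^2 := by
    have hSSnn : 0 ≤ ∑ j, (∑ α, ∑ i, pd i (v α) x * pd j (pd i (v α)) x)^2 := by positivity
    rcases le_or_gt 0 (deriv a (gradNorm v x)) with hd | hd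
    · have h1 : 0 ≤ deriv a (gradNorm v x) / gradNorm v x *
          ∑ j, (∑ α, ∑ i, pd i (v α) x * pd j (pd i (v α)) x)^2 :=
        mul_nonneg (div_nonneg hd hr0.le) hSSnn
      have h2 : min ia 0 *
          (a (gradNorm v x) * ∑ α, ∑ i, ∑ j, (pd j (pd i (v α)) x)^2) ≤ 0 :=
        mul_nonpos_of_nonpos_of_nonneg (min_le_right _ _) (mul_nonneg har.le hHnn)
      linarith
    · have h3 : ia * a (gradNorm v x) ≤ gradNorm v x * deriv a (gradNorm v x) := by
        have h := hinf _ hr0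
        rw [le_div_iff₀ har] at h
        linarith
      have h4 : deriv a (gradNorm v x) / gradNorm v x *
            ((gradNorm v x)^2 * ∑ α, ∑ i, ∑ j, (pd j (pd i (v α)) x)^2)
          ≤ deriv a (gradNorm v x) / gradNorm v x *
            ∑ j, (∑ α, ∑ i, pd i (v α) x * pd j (pd i (v α)) x)^2 :=
        mul_le_mul_of_nonpos_left hCS (le_of_lt (div_neg_of_neg_of_pos hd hr0))
      have h5 : deriv a (gradNorm v x) / gradNorm v x *
            ((gradNorm v x)^2 * ∑ α, ∑ i, ∑ j, (pd j (pd i (v α)) x)^2)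
          = gradNorm v x * deriv a (gradNorm v x) *
              ∑ α, ∑ i, ∑ j, (pd j (pd i (v α)) x)^2 := by
        field_simp
      have h6 : ia * a (gradNorm v x) * (∑ α, ∑ i, ∑ j, (pd j (pd i (v α)) x)^2)
          ≤ gradNorm v x * deriv a (gradNorm v x) *
              ∑ α, ∑ i, ∑ j, (pd j (pd i (v α)) x)^2 :=
        mul_le_mul_of_nonneg_right h3 hHnn
      have h7 : min ia 0 *
            (a (gradNorm v x) * ∑ α, ∑ i, ∑ j, (pd j (pd i (v α)) x)^2)
          ≤ ia * a (gradNorm v x) * (∑ α, ∑ i, ∑ j, (pd j (pd i (v α)) x)^2) := by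
        nlinarith [mul_nonneg har.le hHnn,
          mul_nonneg (mul_nonneg har.le hHnn) (sub_nonneg.mpr (min_le_left ia 0))]
      linarith
  -- final assembly
  rw [ge_iff_le, hT1, hT2, hKey]
  have hexp : (1 + min ia 0) * a (gradNorm v x) *
        (∑ α, ∑ i, ∑ j, (pd j (pd i (v α)) x)^2)
      = a (gradNorm v x) * (∑ α, ∑ i, ∑ j, (pd j (pd i (v α)) x)^2)
        + min ia 0 * (a (gradNorm v x) * ∑ α, ∑ i, ∑ j, (pd j (pd i (v α)) x)^2) := by
    ring
  linarith [hIneq, hexp]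
end
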